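/- arXiv:1106.0722 — 5 statements merged into one kernel-verified Lean document; each statement's English description precedes it below -/
import Mathlib

section
/- There exist constants c > 0 and C < ∞, depending only on d, such that for every ball ℬ = ℬ(z̄, e, r, r*): (i) the set {(x, y') ∈ ℝ^d × ℝ^{d−1} : (x, (y', x_d − |y' − x'|²)) ∈ ℬ} has Lebesgue measure at least c ρ^d; (ii) |π(ℬ)| ≤ C ρ ∏_{j=1}^{d−1} r_j; and (iii) |π*(ℬ)| ≤ C ρ ∏_{j=1}^{d−1} r*_j. -/
open MeasureTheory ENNReal
open scoped RealInnerProductSpace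

noncomputable section

/-- `ℝ^{d-1}` -/
abbrev Vec (n : ℕ) : Type := EuclideanSpace ℝ (Fin n)

/-- `ℝ^d = ℝ^{d-1} × ℝ`, a point `x = (x', x_d)` -/
abbrev Pt (n : ℕ) : Type := Vec n × ℝ

/-- The Radon-like transform `Tf(x) = ∫_{ℝ^{d-1}} f(x' - t, x_d - |t|²) dt`. -/
def radonT (n : ℕ) (f : Pt n → ℝ≥0∞) (x : Pt n) : ℝ≥0∞ :=
  ∫⁻ t : Vec n, f (x.1 - t, x.2 - ‖t‖ ^ 2)

/-- The incidence functional `𝒯(E, E*) = ∫_E T(χ_{E*})`. -/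
def incT (n : ℕ) (E Estar : Set (Pt n)) : ℝ≥0∞ :=
  ∫⁻ x in E, radonT n (Estar.indicator 1) x

/-- Admissibility of the parameters of a ball `ℬ(z̄, e, r, r*)`:
the center `z̄ = (x̄, x̄*)` lies on the incidence manifold `ℐ`, `ρ > 0`,
`e` is an orthonormal basis of `ℝ^{d-1}`, and `r_j r*_j = ρ > 0` for all `j`. -/
def IsBallParams (n : ℕ) (zb : Pt n × Pt n) (e : Fin n → Vec n)
    (r rs : Fin n → ℝ) (ρ : ℝ) : Prop :=
  zb.2.2 = zb.1.2 - ‖zb.2.1 - zb.1.1‖ ^ 2 ∧ 0 < ρ ∧ Orthonormal ℝ e ∧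
    (∀ j, 0 < r j) ∧ (∀ j, 0 < rs j) ∧ (∀ j, r j * rs j = ρ)

/-- The ball `ℬ(z̄, e, r, r*)`, a subset of the incidence manifold
`ℐ = {(x,y) : y_d = x_d - |y' - x'|²} ⊆ ℝ^d × ℝ^d`. -/
def ballI (n : ℕ) (zb : Pt n × Pt n) (e : Fin n → Vec n)
    (r rs : Fin n → ℝ) (ρ : ℝ) : Set (Pt n × Pt n) :=
  fun z => z.2.2 = z.1.2 - ‖z.2.1 - z.1.1‖ ^ 2 ∧
    (∀ j, |⟪z.1.1 - zb.1.1, e j⟫| < r j) ∧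
    |z.1.2 - zb.2.2 - ‖z.1.1 - zb.2.1‖ ^ 2| < ρ ∧
    (∀ j, |⟪z.2.1 - zb.2.1, e j⟫| < rs j) ∧
    |z.2.2 - zb.1.2 + ‖z.2.1 - zb.1.1‖ ^ 2| < ρ

lemma vol_box {n : ℕ} (b : OrthonormalBasis (Fin n) ℝ (Vec n)) (a : Vec n) (s : Fin n → ℝ) :
    volume {x : Vec n | ∀ j, |⟪x - a, b j⟫| < s j} = ∏ j, ENNReal.ofReal (2 * s j) := by
  have h1 : {x : Vec n | ∀ j, |⟪x - a, b j⟫| < s j}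
      = (fun x : Vec n => x + (-a)) ⁻¹' {u : Vec n | ∀ j, |⟪u, b j⟫| < s j} := by
    ext x; simp [sub_eq_add_neg]
  rw [h1, measure_preimage_add_right]
  have h2 : {u : Vec n | ∀ j, |⟪u, b j⟫| < s j}
      = ⇑b.repr ⁻¹' ((MeasurableEquiv.toLp 2 (Fin n → ℝ)).symm ⁻¹'
        (Set.pi Set.univ fun j => Set.Ioo (-(s j)) (s j))) := by
    ext u
    simp only [Set.mem_preimage, Set.mem_setOf_eq, Set.mem_univ_pi, Set.mem_Ioo]
    refine forall_congr' fun j => ?_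
    show _ ↔ -s j < (b.repr u) j ∧ (b.repr u) j < s j
    rw [b.repr_apply_apply, real_inner_comm (b j) u, abs_lt]
  have hms : MeasurableSet (Set.pi Set.univ fun j : Fin n => Set.Ioo (-(s j)) (s j)) :=
    MeasurableSet.univ_pi fun j => measurableSet_Ioo
  rw [h2, b.measurePreserving_repr.measure_preimage
    (hms.preimage (MeasurableEquiv.toLp 2 (Fin n → ℝ)).symm.measurable).nullMeasurableSet]
  rw [(EuclideanSpace.volume_preserving_symm_measurableEquiv_toLp (Fin n)).measure_preimage
    hms.nullMeasurableSet, volume_pi_pi]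
  refine Finset.prod_congr rfl fun j _ => ?_
  rw [Real.volume_Ioo]
  congr 1; ring

lemma vol_slab {V : Type*} [MeasureSpace V] [SigmaFinite (volume : Measure V)]
    {U : Set V} (hU : MeasurableSet U) {g : V → ℝ} (hg : Measurable g) (δ : ℝ) :
    volume {p : V × ℝ | p.1 ∈ U ∧ |p.2 - g p.1| < δ} = volume U * ENNReal.ofReal (2 * δ) := by
  have hmeas : MeasurableSet {p : V × ℝ | p.1 ∈ U ∧ |p.2 - g p.1| < δ} :=
    (hU.preimage measurable_fst).inter (measurableSet_lt
      ((measurable_snd.sub (hg.comp measurable_fst)).abs) measurable_const)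
  rw [Measure.volume_eq_prod, Measure.prod_apply hmeas]
  have hsec : ∀ v : V, (volume : Measure ℝ)
      (Prod.mk v ⁻¹' {p : V × ℝ | p.1 ∈ U ∧ |p.2 - g p.1| < δ})
      = U.indicator (fun _ => ENNReal.ofReal (2 * δ)) v := by
    intro v
    by_cases hv : v ∈ U
    · have hset : Prod.mk v ⁻¹' {p : V × ℝ | p.1 ∈ U ∧ |p.2 - g p.1| < δ}
          = Set.Ioo (g v - δ) (g v + δ) := by
        ext t
        simp only [Set.mem_preimage, Set.mem_setOf_eq, hv, true_and, Set.mem_Ioo, abs_lt]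
        constructor <;> rintro ⟨h1, h2⟩ <;> constructor <;> linarith
      rw [hset, Real.volume_Ioo, Set.indicator_of_mem hv]
      congr 1; ring
    · have hset : Prod.mk v ⁻¹' {p : V × ℝ | p.1 ∈ U ∧ |p.2 - g p.1| < δ} = ∅ := by
        ext t; simp [hv]
      rw [hset, Set.indicator_of_notMem hv]; simp
  simp_rw [hsec]
  rw [lintegral_indicator hU (fun _ => ENNReal.ofReal (2 * δ)), setLIntegral_const, mul_comm]

lemma vol_boxslab {n : ℕ} (b : OrthonormalBasis (Fin n) ℝ (Vec n)) (a : Vec n) (s : Fin n → ℝ)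
    {g : Vec n → ℝ} (hg : Measurable g) (δ : ℝ) :
    volume {x : Pt n | (∀ j, |⟪x.1 - a, b j⟫| < s j) ∧ |x.2 - g x.1| < δ}
      = (∏ j, ENNReal.ofReal (2 * s j)) * ENNReal.ofReal (2 * δ) := by
  have hU : MeasurableSet {u : Vec n | ∀ j, |⟪u - a, b j⟫| < s j} := by
    have h : {u : Vec n | ∀ j, |⟪u - a, b j⟫| < s j}
        = ⋂ j, {u : Vec n | |⟪u - a, b j⟫| < s j} := by
      ext u; simp
    rw [h]
    refine MeasurableSet.iInter fun j => ?_
    exact measurableSet_lt (Continuous.measurable (Continuous.abs (Continuous.inner (continuous_id.sub continuous_const) continuous_const))) measurable_const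
  have := vol_slab (V := Vec n) hU hg δ
  rw [← vol_box b a s]
  exact this

/-- size estimates for balls `ℬ(z̄,e,r,r*)`:
(i) the measure of `ℬ` in the parametrization `(x, y') ↦ (x, (y', x_d - |y'-x'|²))`
of `ℐ` is at least `c ρ^d`; (ii) `|π(ℬ)| ≤ C ρ ∏ r_j`; (iii) `|π*(ℬ)| ≤ C ρ ∏ r*_j`. -/
theorem stmt1 (d : ℕ) (hd : 2 ≤ d) :
    ∃ c C : ℝ, 0 < c ∧ 0 < C ∧
      ∀ (zb : Pt (d - 1) × Pt (d - 1)) (e : Fin (d - 1) → Vec (d - 1))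
        (r rs : Fin (d - 1) → ℝ) (ρ : ℝ), IsBallParams (d - 1) zb e r rs ρ →
        ENNReal.ofReal (c * ρ ^ d) ≤
            volume {p : Pt (d - 1) × Vec (d - 1) |
              (p.1, (p.2, p.1.2 - ‖p.2 - p.1.1‖ ^ 2)) ∈ ballI (d - 1) zb e r rs ρ} ∧
          volume (Prod.fst '' ballI (d - 1) zb e r rs ρ) ≤
            ENNReal.ofReal (C * ρ * ∏ j, r j) ∧
          volume (Prod.snd '' ballI (d - 1) zb e r rs ρ) ≤
            ENNReal.ofReal (C * ρ * ∏ j, rs j) := by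
  have hm1 : d - 1 + 1 = d := by omega
  set m := d - 1 with hmdef
  haveI : Nonempty (Fin m) := ⟨⟨0, by omega⟩⟩
  set ε : ℝ := 1 / (2 * (m + 1)) with hεdef
  have hε0 : 0 < ε := by rw [hεdef]; positivity
  have hε1 : ε ≤ 1 := by
    rw [hεdef, div_le_one (by positivity)]
    have : (0:ℝ) ≤ (m:ℝ) := Nat.cast_nonneg m
    linarith
  refine ⟨(2*ε)^(2*m) / 2, 2^d, div_pos (pow_pos (by linarith) _) two_pos, by positivity, ?_⟩
  rintro zb e r rs ρ ⟨hz, hρ, he, hr, hrs, hrrs⟩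
  have hspan : ⊤ ≤ Submodule.span ℝ (Set.range e) :=
    (he.linearIndependent.span_eq_top_of_card_eq_finrank
      (by rw [Fintype.card_fin, finrank_euclideanSpace_fin])).ge
  set b : OrthonormalBasis (Fin m) ℝ (Vec m) := OrthonormalBasis.mk he hspan with hbdef
  have hb : ∀ j, b j = e j := fun j => by rw [hbdef]; simp
  have hg1 : Measurable (fun x' : Vec m => zb.2.2 + ‖x' - zb.2.1‖^2) :=
    Continuous.measurable (continuous_const.add
      (((continuous_id.sub continuous_const).norm).pow 2))
  have hg2 : Measurable (fun y' : Vec m => zb.1.2 - ‖y' - zb.1.1‖^2) :=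
    Continuous.measurable (continuous_const.sub
      (((continuous_id.sub continuous_const).norm).pow 2))
  have hg0 : Measurable (fun x' : Vec m => zb.1.2 + ‖x' - zb.1.1‖^2
      - 2 * ⟪x' - zb.1.1, zb.2.1 - zb.1.1⟫) :=
    Continuous.measurable
      ((continuous_const.add (((continuous_id.sub continuous_const).norm).pow 2)).sub
        (continuous_const.mul
          (Continuous.inner (continuous_id.sub continuous_const) continuous_const)))
  have hprodcf : ∀ s : Fin m → ℝ, ∏ j, (2 * (ε * s j)) = (2*ε)^m * ∏ j, s j := by
    intro s
    calc ∏ j, (2 * (ε * s j)) = ∏ j, ((2*ε) * s j) :=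
          Finset.prod_congr rfl fun j _ => by ring
      _ = (2*ε)^m * ∏ j, s j := by
          rw [Finset.prod_mul_distrib, Finset.prod_const, Finset.card_univ, Fintype.card_fin]
  have hprod : (∏ j, r j) * (∏ j, rs j) = ρ ^ m := by
    rw [← Finset.prod_mul_distrib]
    calc ∏ j, (r j * rs j) = ∏ _j : Fin m, ρ := Finset.prod_congr rfl fun j _ => hrrs j
      _ = ρ ^ m := by rw [Finset.prod_const, Finset.card_univ, Fintype.card_fin]
  refine ⟨?_, ?_, ?_⟩
  · -- lower bound
    have hεr : ∀ j, ε * r j ≤ r j := fun j => mul_le_of_le_one_left (hr j).le hε1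
    have hεrs : ∀ j, ε * rs j ≤ rs j := fun j => mul_le_of_le_one_left (hrs j).le hε1
    have hsub : ({x : Pt m | (∀ j, |⟪x.1 - zb.1.1, b j⟫| < ε * r j) ∧
          |x.2 - (zb.1.2 + ‖x.1 - zb.1.1‖^2
            - 2 * ⟪x.1 - zb.1.1, zb.2.1 - zb.1.1⟫)| < ρ/4} ×ˢ
        {y' : Vec m | ∀ j, |⟪y' - zb.2.1, b j⟫| < ε * rs j}) ⊆
        {p : Pt m × Vec m | (p.1, (p.2, p.1.2 - ‖p.2 - p.1.1‖ ^ 2)) ∈ ballI m zb e r rs ρ} := by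
      rintro ⟨x, y'⟩ ⟨⟨hX1, hX2⟩, hT⟩
      refine ⟨rfl, fun j => ?_, ?_, fun j => ?_, ?_⟩
      · show |⟪x.1 - zb.1.1, e j⟫| < r j
        rw [← hb j]
        exact lt_of_lt_of_le (hX1 j) (hεr j)
      · show |x.2 - zb.2.2 - ‖x.1 - zb.2.1‖^2| < ρ
        have hxv : x.1 - zb.2.1 = (x.1 - zb.1.1) - (zb.2.1 - zb.1.1) := by abel
        have hBid : x.2 - zb.2.2 - ‖x.1 - zb.2.1‖^2
            = x.2 - (zb.1.2 + ‖x.1 - zb.1.1‖^2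
              - 2 * ⟪x.1 - zb.1.1, zb.2.1 - zb.1.1⟫) := by
          rw [hz, hxv, norm_sub_sq_real (x.1 - zb.1.1) (zb.2.1 - zb.1.1)]; ring
        rw [hBid]
        exact lt_trans hX2 (by linarith)
      · show |⟪y' - zb.2.1, e j⟫| < rs j
        rw [← hb j]
        exact lt_of_lt_of_le (hT j) (hεrs j)
      · show |x.2 - ‖y' - x.1‖^2 - zb.1.2 + ‖y' - zb.1.1‖^2| < ρ
        have hA2 : y' - zb.1.1 = (y' - zb.2.1) + (zb.2.1 - zb.1.1) := by abel
        have hB2 : y' - x.1 = (y' - zb.1.1) - (x.1 - zb.1.1) := by abel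
        have hDid : x.2 - ‖y' - x.1‖^2 - zb.1.2 + ‖y' - zb.1.1‖^2
            = (x.2 - (zb.1.2 + ‖x.1 - zb.1.1‖^2
                - 2 * ⟪x.1 - zb.1.1, zb.2.1 - zb.1.1⟫))
              + 2 * ⟪y' - zb.2.1, x.1 - zb.1.1⟫ := by
          rw [hB2, norm_sub_sq_real (y' - zb.1.1) (x.1 - zb.1.1), hA2, inner_add_left,
            real_inner_comm (zb.2.1 - zb.1.1) (x.1 - zb.1.1)]
          ring
        have hwu : |⟪y' - zb.2.1, x.1 - zb.1.1⟫| ≤ ε^2 * m * ρ := by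
          rw [← b.sum_inner_mul_inner (y' - zb.2.1) (x.1 - zb.1.1)]
          refine (Finset.abs_sum_le_sum_abs _ _).trans ?_
          have hle : ∀ j : Fin m,
              |⟪y' - zb.2.1, b j⟫ * ⟪b j, x.1 - zb.1.1⟫| ≤ (ε * rs j) * (ε * r j) := by
            intro j
            rw [abs_mul]
            refine mul_le_mul (hT j).le ?_ (abs_nonneg _)
              (by have := (hrs j).le; positivity)
            rw [real_inner_comm]
            exact (hX1 j).le
          refine (Finset.sum_le_sum fun j _ => hle j).trans ?_
          have heq : ∀ j : Fin m, (ε * rs j) * (ε * r j) = ε^2 * ρ := fun j => by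
            rw [show (ε * rs j) * (ε * r j) = ε^2 * (r j * rs j) by ring, hrrs j]
          rw [Finset.sum_congr rfl fun j _ => heq j, Finset.sum_const, Finset.card_univ,
            Fintype.card_fin, nsmul_eq_mul]
          apply le_of_eq; ring
        have hεm : ε^2 * (m:ℝ) * ρ ≤ ρ/4 := by
          have h1 : ε^2 * (m:ℝ) ≤ 1/4 := by
            rw [hεdef, div_pow, one_pow, div_mul_eq_mul_div,
              div_le_div_iff₀ (by positivity) (by norm_num)]
            have hM : (0:ℝ) ≤ (m:ℝ) := Nat.cast_nonneg m
            nlinarith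
          nlinarith
        calc |x.2 - ‖y' - x.1‖^2 - zb.1.2 + ‖y' - zb.1.1‖^2|
            = |(x.2 - (zb.1.2 + ‖x.1 - zb.1.1‖^2
                - 2 * ⟪x.1 - zb.1.1, zb.2.1 - zb.1.1⟫))
              + 2 * ⟪y' - zb.2.1, x.1 - zb.1.1⟫| := by rw [hDid]
          _ ≤ |x.2 - (zb.1.2 + ‖x.1 - zb.1.1‖^2
                - 2 * ⟪x.1 - zb.1.1, zb.2.1 - zb.1.1⟫)|
              + |2 * ⟪y' - zb.2.1, x.1 - zb.1.1⟫| := abs_add_le _ _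
          _ < ρ := by
              rw [abs_mul]
              have h2 : |(2:ℝ)| = 2 := by norm_num
              rw [h2]
              linarith
    refine le_trans ?_ (measure_mono hsub)
    have hvol : volume ({x : Pt m | (∀ j, |⟪x.1 - zb.1.1, b j⟫| < ε * r j) ∧
          |x.2 - (zb.1.2 + ‖x.1 - zb.1.1‖^2
            - 2 * ⟪x.1 - zb.1.1, zb.2.1 - zb.1.1⟫)| < ρ/4} ×ˢ
        {y' : Vec m | ∀ j, |⟪y' - zb.2.1, b j⟫| < ε * rs j})
        = ((∏ j, ENNReal.ofReal (2 * (ε * r j))) * ENNReal.ofReal (2 * (ρ/4)))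
          * ∏ j, ENNReal.ofReal (2 * (ε * rs j)) := by
      rw [Measure.volume_eq_prod, Measure.prod_prod]
      congr 1
      · exact vol_boxslab b zb.1.1 (fun j => ε * r j) hg0 (ρ/4)
      · exact vol_box b zb.2.1 (fun j => ε * rs j)
    rw [hvol]
    have hp1 : (0:ℝ) ≤ ∏ j, (2 * (ε * r j)) :=
      Finset.prod_nonneg fun j _ => by have := (hr j).le; positivity
    have hp2 : (0:ℝ) ≤ (∏ j, (2 * (ε * r j))) * (2 * (ρ/4)) := by positivity
    rw [← ENNReal.ofReal_prod_of_nonneg (fun j _ => by have := (hr j).le; positivity),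
      ← ENNReal.ofReal_prod_of_nonneg (fun j _ => by have := (hrs j).le; positivity),
      ← ENNReal.ofReal_mul hp1, ← ENNReal.ofReal_mul hp2]
    apply ENNReal.ofReal_le_ofReal
    rw [hprodcf r, hprodcf rs]
    have hrw : ((2*ε)^m * ∏ j, r j) * (2*(ρ/4)) * ((2*ε)^m * ∏ j, rs j)
        = (2*ε)^m * (2*ε)^m / 2 * (((∏ j, r j) * ∏ j, rs j) * ρ) := by ring
    have hexp : (2*ε)^(2*m) = (2*ε)^m * (2*ε)^m := by rw [two_mul m, pow_add]
    have hd' : ρ^d = ρ^m * ρ := by rw [← hm1, pow_succ]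
    rw [hrw, hprod, hexp, hd']
  · -- upper bound for π
    have hsub : Prod.fst '' ballI m zb e r rs ρ ⊆
        {x : Pt m | (∀ j, |⟪x.1 - zb.1.1, b j⟫| < r j) ∧
          |x.2 - (zb.2.2 + ‖x.1 - zb.2.1‖^2)| < ρ} := by
      rintro _ ⟨z, ⟨_, hA, hB, _, _⟩, rfl⟩
      refine ⟨fun j => by rw [hb j]; exact hA j, ?_⟩
      rw [← sub_sub]
      exact hB
    calc volume (Prod.fst '' ballI m zb e r rs ρ)
        ≤ volume {x : Pt m | (∀ j, |⟪x.1 - zb.1.1, b j⟫| < r j) ∧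
            |x.2 - (zb.2.2 + ‖x.1 - zb.2.1‖^2)| < ρ} := measure_mono hsub
      _ = (∏ j, ENNReal.ofReal (2 * r j)) * ENNReal.ofReal (2 * ρ) :=
          vol_boxslab b zb.1.1 r hg1 ρ
      _ ≤ ENNReal.ofReal ((2:ℝ)^d * ρ * ∏ j, r j) := by
          have hp1 : (0:ℝ) ≤ ∏ j, (2 * r j) :=
            Finset.prod_nonneg fun j _ => by have := (hr j).le; positivity
          rw [← ENNReal.ofReal_prod_of_nonneg (fun j _ => by have := (hr j).le; positivity),
            ← ENNReal.ofReal_mul hp1]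
          apply ENNReal.ofReal_le_ofReal
          have h1 : ∏ j, ((2:ℝ) * r j) = (2:ℝ)^m * ∏ j, r j := by
            rw [Finset.prod_mul_distrib, Finset.prod_const, Finset.card_univ,
              Fintype.card_fin]
          rw [h1, ← hm1, pow_succ]
          apply le_of_eq; ring
  · -- upper bound for π*
    have hsub : Prod.snd '' ballI m zb e r rs ρ ⊆
        {y : Pt m | (∀ j, |⟪y.1 - zb.2.1, b j⟫| < rs j) ∧
          |y.2 - (zb.1.2 - ‖y.1 - zb.1.1‖^2)| < ρ} := by
      rintro _ ⟨z, ⟨_, _, _, hC, hD⟩, rfl⟩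
      refine ⟨fun j => by rw [hb j]; exact hC j, ?_⟩
      have hrw : z.2.2 - (zb.1.2 - ‖z.2.1 - zb.1.1‖^2)
          = z.2.2 - zb.1.2 + ‖z.2.1 - zb.1.1‖^2 := by ring
      rw [hrw]
      exact hD
    calc volume (Prod.snd '' ballI m zb e r rs ρ)
        ≤ volume {y : Pt m | (∀ j, |⟪y.1 - zb.2.1, b j⟫| < rs j) ∧
            |y.2 - (zb.1.2 - ‖y.1 - zb.1.1‖^2)| < ρ} := measure_mono hsub
      _ = (∏ j, ENNReal.ofReal (2 * rs j)) * ENNReal.ofReal (2 * ρ) :=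
          vol_boxslab b zb.2.1 rs hg2 ρ
      _ ≤ ENNReal.ofReal ((2:ℝ)^d * ρ * ∏ j, rs j) := by
          have hp1 : (0:ℝ) ≤ ∏ j, (2 * rs j) :=
            Finset.prod_nonneg fun j _ => by have := (hrs j).le; positivity
          rw [← ENNReal.ofReal_prod_of_nonneg (fun j _ => by have := (hrs j).le; positivity),
            ← ENNReal.ofReal_mul hp1]
          apply ENNReal.ofReal_le_ofReal
          have h1 : ∏ j, ((2:ℝ) * rs j) = (2:ℝ)^m * ∏ j, rs j := by
            rw [Finset.prod_mul_distrib, Finset.prod_const, Finset.card_univ,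
              Fintype.card_fin]
          rw [h1, ← hm1, pow_succ]
          apply le_of_eq; ring
end
end

section
/- There exists a constant c > 0, depending only on d, with the following property. Let B ⊆ ℝ^{d−1} be the open unit ball, and let Φ : ℝ^{d−1} × ℝ^{d−1} → ℝ^{d−1} × ℝ be the map Φ(s, u) = (u, s·u). Let A : ℝ^{d−1} → ℝ^{d−1} be a symmetric invertible linear transformation, and let ω ⊆ A(B) × ℝ^{d−1} be Lebesgue measurable. Then the outer Lebesgue measure of the image satisfies |Φ(ω)| ≥ c |det A|^{−1} ∫_ω |A u| du ds. -/
open MeasureTheory ENNReal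
open scoped RealInnerProductSpace

noncomputable section

/-- Key slab estimate: if `E` is a subset of the unit ball and `v ≠ 0`, then the outer
measure of the image of `E` under `t ↦ ⟪t, v⟫` is at least `2^{-(n-1)} ‖v‖ |E|`. -/
lemma slab_estimate (n : ℕ) (hn : 0 < n) (v : Vec n) (hv : v ≠ 0) (E : Set (Vec n))
    (hE : E ⊆ Metric.ball 0 1) :
    ENNReal.ofReal ((2 : ℝ)⁻¹ ^ (n - 1)) * ENNReal.ofReal ‖v‖ * volume E ≤
      volume ((fun t => ⟪t, v⟫) '' E) := by
  classical
  have hvnorm : ‖v‖ ≠ 0 := norm_ne_zero_iff.2 hv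
  have hvpos : (0 : ℝ) < ‖v‖ := norm_pos_iff.2 hv
  set i0 : Fin n := ⟨0, hn⟩
  set v' : Vec n := ‖v‖⁻¹ • v with hv'def
  have hv' : ‖v'‖ = 1 := norm_smul_inv_norm hv
  -- orthonormal basis with `b i0 = v'`
  have horth : Orthonormal ℝ (Set.restrict {i0} (fun _ : Fin n => v')) := by
    constructor
    · intro i; exact hv'
    · intro i j hij
      exact absurd (Subsingleton.elim i j) hij
  have hcard : Module.finrank ℝ (Vec n) = Fintype.card (Fin n) := by
    simp [finrank_euclideanSpace_fin]
  obtain ⟨b, hb⟩ := horth.exists_orthonormalBasis_extension_of_card_eq hcard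
  have hb0 : b i0 = v' := hb i0 rfl
  have hrepr : ∀ t : Vec n, ⟪t, v⟫ = ‖v‖ * b.repr t i0 := by
    intro t
    rw [b.repr_apply_apply, hb0, hv'def, real_inner_smul_left, real_inner_comm]
    field_simp
  -- measurable hull of the image
  set G : Set ℝ := toMeasurable volume ((fun t => ⟪t, v⟫) '' E) with hGdef
  have hGm : MeasurableSet G := measurableSet_toMeasurable _ _
  have hGsub : (fun t => ⟪t, v⟫) '' E ⊆ G := subset_toMeasurable _ _
  have hGeq : volume G = volume ((fun t => ⟪t, v⟫) '' E) := measure_toMeasurable _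
  -- the slab in coordinates
  set f : Fin n → Set ℝ :=
    fun i => if i = i0 then (fun x : ℝ => ‖v‖ * x) ⁻¹' G else Set.Icc (-1 : ℝ) 1 with hfdef
  set W : Set (EuclideanSpace ℝ (Fin n)) := WithLp.ofLp ⁻¹' Set.univ.pi f with hWdef
  have hfm : ∀ i, MeasurableSet (f i) := by
    intro i
    simp only [hfdef]
    split
    · exact hGm.preimage (measurable_const_mul _)
    · exact measurableSet_Icc
  have hWm : MeasurableSet W := (MeasurableSet.univ_pi hfm).preimage (WithLp.measurable_ofLp _ _)
  have hEW : E ⊆ ⇑b.repr ⁻¹' W := by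
    intro t ht
    simp only [Set.mem_preimage, hWdef, Set.mem_pi, Set.mem_univ, forall_true_left]
    intro i
    simp only [hfdef]
    split
    · rename_i h
      subst h
      simp only [Set.mem_preimage]
      rw [← hrepr t]
      exact hGsub (Set.mem_image_of_mem _ ht)
    · have ht1 : ‖t‖ < 1 := by
        simpa [mem_ball_zero_iff] using hE ht
      have : |b.repr t i| ≤ ‖t‖ := by
        rw [b.repr_apply_apply]
        calc |⟪b i, t⟫| ≤ ‖b i‖ * ‖t‖ := abs_real_inner_le_norm _ _
          _ = ‖t‖ := by rw [b.orthonormal.1 i, one_mul]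
      have := this.trans ht1.le
      rw [abs_le] at this
      exact Set.mem_Icc.2 this
  -- measure of the slab
  have hWvol : volume W = ENNReal.ofReal ‖v‖⁻¹ * volume G * ENNReal.ofReal 2 ^ (n - 1) := by
    have h1 : volume W = (volume : Measure (Fin n → ℝ)) (Set.univ.pi f) := by
      rw [← (PiLp.volume_preserving_ofLp (Fin n)).measure_preimage
        (MeasurableSet.univ_pi hfm).nullMeasurableSet]
    rw [h1, volume_pi_pi]
    have h2 : ∀ i ∈ Finset.univ.erase i0, volume (f i) = ENNReal.ofReal 2 := by
      intro i hi
      have hi' : i ≠ i0 := (Finset.mem_erase.1 hi).1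
      simp only [hfdef, if_neg hi']
      rw [Real.volume_Icc]
      norm_num
    rw [← Finset.mul_prod_erase Finset.univ _ (Finset.mem_univ i0),
      Finset.prod_congr rfl h2, Finset.prod_const]
    have hcard' : (Finset.univ.erase i0).card = n - 1 := by
      rw [Finset.card_erase_of_mem (Finset.mem_univ i0), Finset.card_univ, Fintype.card_fin]
    rw [hcard']
    congr 1
    simp only [hfdef, if_true]
    rw [Real.volume_preimage_mul_left hvnorm]
    congr 1
    rw [abs_of_nonneg (by positivity)]
  -- put everything together
  have hmeas : volume E ≤ ENNReal.ofReal ‖v‖⁻¹ * volume G * ENNReal.ofReal 2 ^ (n - 1) := by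
    rw [← hWvol]
    calc volume E ≤ volume (⇑b.repr ⁻¹' W) := measure_mono hEW
      _ = volume W := b.measurePreserving_repr.measure_preimage hWm.nullMeasurableSet
  rw [← hGeq]
  calc ENNReal.ofReal ((2 : ℝ)⁻¹ ^ (n - 1)) * ENNReal.ofReal ‖v‖ * volume E
      ≤ ENNReal.ofReal ((2 : ℝ)⁻¹ ^ (n - 1)) * ENNReal.ofReal ‖v‖ *
        (ENNReal.ofReal ‖v‖⁻¹ * volume G * ENNReal.ofReal 2 ^ (n - 1)) :=
        by gcongr
    _ = (ENNReal.ofReal ((2 : ℝ)⁻¹ ^ (n - 1)) * ENNReal.ofReal ‖v‖ *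
        ENNReal.ofReal ‖v‖⁻¹ * ENNReal.ofReal ((2 : ℝ) ^ (n - 1))) * volume G := by
        rw [← ENNReal.ofReal_pow (by norm_num : (0:ℝ) ≤ 2)]; ring
    _ = ENNReal.ofReal ((2 : ℝ)⁻¹ ^ (n - 1) * ‖v‖ * ‖v‖⁻¹ * (2 : ℝ) ^ (n - 1)) * volume G := by
        rw [← ENNReal.ofReal_mul (by positivity), ← ENNReal.ofReal_mul (by positivity),
          ← ENNReal.ofReal_mul (by positivity)]
    _ = volume G := by
        have : (2 : ℝ)⁻¹ ^ (n - 1) * ‖v‖ * ‖v‖⁻¹ * (2 : ℝ) ^ (n - 1) = 1 := by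
          field_simp
          rw [← mul_pow]; norm_num
        rw [this, ENNReal.ofReal_one, one_mul]

/-- slicing lemma: for a symmetric invertible linear map `A` of
`ℝ^{d-1}` and a measurable `ω ⊆ A(B) × ℝ^{d-1}` (with `B` the open unit ball),
the outer measure of the image of `ω` under `Φ(s,u) = (u, s·u)` is at least
`c |det A|⁻¹ ∫_ω |Au| du ds`. -/
theorem stmt12 (d : ℕ) (hd : 2 ≤ d) :
    ∃ c : ℝ, 0 < c ∧
      ∀ (A : Vec (d - 1) →ₗ[ℝ] Vec (d - 1)),
        (∀ x y : Vec (d - 1), ⟪A x, y⟫ = ⟪x, A y⟫) → LinearMap.det A ≠ 0 →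
        ∀ (ω : Set (Vec (d - 1) × Vec (d - 1))), MeasurableSet ω →
          ω ⊆ (A '' Metric.ball 0 1) ×ˢ Set.univ →
          ENNReal.ofReal c * (ENNReal.ofReal |LinearMap.det A|)⁻¹ *
              ∫⁻ p in ω, ENNReal.ofReal ‖A p.2‖ ≤
            volume ((fun p : Vec (d - 1) × Vec (d - 1) => (p.2, ⟪p.1, p.2⟫)) '' ω) := by
  have hn : 0 < d - 1 := by omega
  refine ⟨(2 : ℝ)⁻¹ ^ (d - 1 - 1), by positivity, ?_⟩
  intro A hsym hdet ω hω hsub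
  set c₀ : ℝ := (2 : ℝ)⁻¹ ^ (d - 1 - 1) with hc₀
  set D : ℝ≥0∞ := ENNReal.ofReal |LinearMap.det A| with hDdef
  have hD0 : D ≠ 0 := by
    rw [hDdef]
    simp only [ne_eq, ENNReal.ofReal_eq_zero, not_le, abs_pos]
    exact hdet
  have hDt : D ≠ ⊤ := ENNReal.ofReal_ne_top
  have hAinj : Function.Injective A :=
    fun x y h => (LinearMap.equivOfDetNeZero A hdet).injective h
  set Φ : Vec (d - 1) × Vec (d - 1) → Vec (d - 1) × ℝ := fun p => (p.2, ⟪p.1, p.2⟫) with hΦdef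
  set S := Φ '' ω with hSdef
  set T := toMeasurable volume S with hTdef
  have hTm : MeasurableSet T := measurableSet_toMeasurable _ _
  have hST : S ⊆ T := subset_toMeasurable _ _
  have hTeq : volume T = volume S := measure_toMeasurable _
  -- RHS via Fubini
  have hRHS : volume S = ∫⁻ u, volume (Prod.mk u ⁻¹' T) := by
    rw [← hTeq, MeasureTheory.Measure.volume_eq_prod, Measure.prod_apply hTm]
  -- LHS via Fubini
  have hfm : Measurable fun p : Vec (d - 1) × Vec (d - 1) => ENNReal.ofReal ‖A p.2‖ :=
    (measurable_ofReal.comp ((A.continuous_of_finiteDimensional.comp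
      continuous_snd).norm.measurable))
  have hLHS : ∫⁻ p in ω, ENNReal.ofReal ‖A p.2‖ =
      ∫⁻ u, ENNReal.ofReal ‖A u‖ * volume {s | (s, u) ∈ ω} := by
    rw [← lintegral_indicator hω, MeasureTheory.Measure.volume_eq_prod,
      lintegral_prod_symm _ (hfm.indicator hω).aemeasurable]
    refine lintegral_congr fun u => ?_
    have hsm : MeasurableSet {s : Vec (d - 1) | (s, u) ∈ ω} := measurable_prodMk_right hω
    calc (∫⁻ s, Set.indicator ω (fun p : Vec (d - 1) × Vec (d - 1) => ENNReal.ofReal ‖A p.2‖) (s, u))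
        = ∫⁻ s, Set.indicator {s | (s, u) ∈ ω} (fun _ => ENNReal.ofReal ‖A u‖) s :=
          lintegral_congr fun s => by by_cases h : (s, u) ∈ ω <;> simp [Set.indicator, h]
      _ = ENNReal.ofReal ‖A u‖ * volume {s | (s, u) ∈ ω} := by
          rw [lintegral_indicator hsm, setLIntegral_const]
  rw [hLHS, hRHS]
  have hconst : ENNReal.ofReal c₀ * D⁻¹ ≠ ⊤ :=
    ENNReal.mul_ne_top ENNReal.ofReal_ne_top (ENNReal.inv_ne_top.2 hD0)
  rw [← lintegral_const_mul' _ _ hconst]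
  refine lintegral_mono fun u => ?_
  -- pointwise estimate
  by_cases hu : A u = 0
  · simp [hu]
  · set E : Set (Vec (d - 1)) := {s | (s, u) ∈ ω} with hEdef
    set F : Set (Vec (d - 1)) := ⇑A ⁻¹' E with hFdef
    have hEB : E ⊆ ⇑A '' Metric.ball 0 1 := by
      intro s hs
      exact (hsub hs).1
    have hEF : ⇑A '' F = E :=
      Set.image_preimage_eq_of_subset (hEB.trans (Set.image_subset_range _ _))
    have hFB : F ⊆ Metric.ball 0 1 := by
      intro s hs
      obtain ⟨t, htB, htA⟩ := hEB hs
      rwa [← hAinj htA]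
    have hvolE : volume E = D * volume F := by
      rw [← hEF, Measure.addHaar_image_linearMap]
    have himg : (fun t => ⟪t, A u⟫) '' F ⊆ Prod.mk u ⁻¹' T := by
      refine Set.Subset.trans ?_ (Set.preimage_mono hST)
      rintro x ⟨t, htF, rfl⟩
      have hmem : (A t, u) ∈ ω := htF
      have hS : Φ (A t, u) ∈ S := Set.mem_image_of_mem _ hmem
      simp only [Set.mem_preimage]
      rw [← hsym t u]
      exact hS
    have hslab := slab_estimate (d - 1) hn (A u) hu F hFB
    calc ENNReal.ofReal c₀ * D⁻¹ * (ENNReal.ofReal ‖A u‖ * volume E)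
        = (ENNReal.ofReal c₀ * ENNReal.ofReal ‖A u‖ * volume F) * (D⁻¹ * D) := by
          rw [hvolE]; ring
      _ = ENNReal.ofReal c₀ * ENNReal.ofReal ‖A u‖ * volume F := by
          rw [ENNReal.inv_mul_cancel hD0 hDt, mul_one]
      _ ≤ volume ((fun t => ⟪t, A u⟫) '' F) := hslab
      _ ≤ volume (Prod.mk u ⁻¹' T) := measure_mono himg
end
end

section
/- For any integer n ≥ 1 and any η > 0 there exists c > 0 with the following property: for any Lebesgue measurable set S ⊆ ℝ^n satisfying 0 < |S| < ∞ there exists a bounded convex set 𝒞 ⊆ ℝ^n of positive measure such that for every convex subset 𝒞' ⊆ 𝒞 with |𝒞'| ≤ |𝒞|/2 one has |S ∩ (𝒞 \ 𝒞')| ≥ c (|S|/|𝒞|)^η |S|. -/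
open MeasureTheory ENNReal

noncomputable section

/-- approximation by convex sets: given `n ≥ 1` and `η > 0`,
any set `S` of positive finite measure admits a bounded convex set `𝒞` such
that removing any convex `𝒞' ⊆ 𝒞` of at most half the measure of `𝒞` still
leaves at least `c (|S|/|𝒞|)^η |S|` of `S` inside `𝒞 \ 𝒞'`. -/
theorem stmt13 (n : ℕ) (hn : 1 ≤ n) (η : ℝ) (hη : 0 < η) :
    ∃ c : ℝ, 0 < c ∧
      ∀ (S : Set (Fin n → ℝ)), MeasurableSet S → 0 < volume S → volume S < ⊤ →
        ∃ 𝒞 : Set (Fin n → ℝ),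
          Convex ℝ 𝒞 ∧ Bornology.IsBounded 𝒞 ∧ 0 < volume 𝒞 ∧
          ∀ 𝒞' ⊆ 𝒞, Convex ℝ 𝒞' → volume 𝒞' ≤ volume 𝒞 / 2 →
            ENNReal.ofReal c * (volume S / volume 𝒞) ^ η * volume S ≤
              volume (S ∩ (𝒞 \ 𝒞')) := by
  classical
  -- real constants
  have h2η : (1:ℝ) < 2 ^ η :=
    (Real.one_lt_rpow_iff_of_pos (by norm_num)).2 (Or.inl ⟨one_lt_two, hη⟩)
  set δ : ℝ := min (2 ^ η - 1) 1 with hδdef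
  have hδpos : 0 < δ := lt_min (by linarith) one_pos
  have hδ1 : δ ≤ 1 := min_le_right _ _
  have hδ2 : δ ≤ 2 ^ η - 1 := min_le_left _ _
  have h8pos : (0:ℝ) < 8 ^ (-η) := Real.rpow_pos_of_pos (by norm_num) _
  refine ⟨δ * 8 ^ (-η) / 64, by positivity, ?_⟩
  set c : ℝ := δ * 8 ^ (-η) / 64 with hcdef
  intro S hS hS0 hStop
  set s := volume S with hsdef
  have hsne : s ≠ 0 := hS0.ne'
  have hstne : s ≠ ∞ := hStop.ne
  -- ENNReal constants
  set w : ℝ≥0∞ := (8:ℝ≥0∞) ^ (-η) with hwdef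
  set u : ℝ≥0∞ := ENNReal.ofReal c with hudef
  set D : ℝ≥0∞ := ENNReal.ofReal δ with hDdef
  have h8η0 : (8:ℝ≥0∞) ^ η ≠ 0 := (ENNReal.rpow_pos (by norm_num) (by norm_num)).ne'
  have h8ηt : (8:ℝ≥0∞) ^ η ≠ ∞ := ENNReal.rpow_ne_top_of_nonneg hη.le (by norm_num)
  have hw8 : w * (8:ℝ≥0∞) ^ η = 1 := by
    rw [hwdef, ENNReal.rpow_neg, ENNReal.inv_mul_cancel h8η0 h8ηt]
  have hwreal : w = ENNReal.ofReal ((8:ℝ) ^ (-η)) := by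
    rw [hwdef, show ((8:ℝ≥0∞)) = ENNReal.ofReal (8:ℝ) by norm_num,
      ENNReal.ofReal_rpow_of_pos (by norm_num)]
  have huD : (64:ℝ≥0∞) * u = D * w := by
    rw [hudef, hDdef, hwreal, ← ENNReal.ofReal_mul hδpos.le,
      show ((64:ℝ≥0∞)) = ENNReal.ofReal (64:ℝ) by norm_num,
      ← ENNReal.ofReal_mul (by norm_num)]
    congr 1
    rw [hcdef]; ring
  have hD1 : D ≤ 1 := ENNReal.ofReal_le_one.2 hδ1
  have h2D : 1 + D ≤ (2:ℝ≥0∞) ^ η := by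
    have h1 : 1 + D = ENNReal.ofReal (1 + δ) := by
      rw [ENNReal.ofReal_add (by norm_num) hδpos.le, ENNReal.ofReal_one]
    have h2 : ((2:ℝ≥0∞)) ^ η = ENNReal.ofReal ((2:ℝ) ^ η) := by
      rw [show ((2:ℝ≥0∞)) = ENNReal.ofReal (2:ℝ) by norm_num,
        ENNReal.ofReal_rpow_of_pos (by norm_num)]
    rw [h1, h2]
    exact ENNReal.ofReal_le_ofReal (by linarith)
  -- the key peeling induction
  have key : ∀ k : ℕ, ∀ T : Set (Fin n → ℝ), IsCompact T → T ⊆ S →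
      s ≤ 8 * volume (convexHull ℝ T) →
      17 * s ≤ 64 * volume T + w * ((s / volume (convexHull ℝ T)) ^ η * s) →
      16 * volume (convexHull ℝ T) ≤ 2 ^ k * s →
      ∃ 𝒞 : Set (Fin n → ℝ),
        Convex ℝ 𝒞 ∧ Bornology.IsBounded 𝒞 ∧ 0 < volume 𝒞 ∧
        ∀ 𝒞' ⊆ 𝒞, Convex ℝ 𝒞' → volume 𝒞' ≤ volume 𝒞 / 2 →
          ENNReal.ofReal c * (s / volume 𝒞) ^ η * s ≤
            volume (S ∩ (𝒞 \ 𝒞')) := by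
    intro k
    induction k with
    | zero =>
      intro T hTc hTS hII hI hK
      exfalso
      set P := convexHull ℝ T with hPdef
      set p := volume P with hpdef
      have hpfin : p ≠ ∞ := ((isBounded_convexHull.2 hTc.isBounded).measure_lt_top).ne
      have h1 : 16 * p ≤ 8 * p := by
        calc 16 * p ≤ 2 ^ 0 * s := hK
        _ = s := by ring
        _ ≤ 8 * p := hII
      have h2 : 8 * p + 8 * p ≤ 8 * p + 0 := by
        calc 8 * p + 8 * p = 16 * p := by ring
        _ ≤ 8 * p := h1
        _ = 8 * p + 0 := by ring
      have h3 : 8 * p ≤ 0 :=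
        (ENNReal.add_le_add_iff_left (ENNReal.mul_ne_top (by norm_num) hpfin)).1 h2
      have hp0 : p = 0 := by
        have h8 : (8:ℝ≥0∞) * p = 0 := le_zero_iff.1 h3
        simpa using h8
      have h4 : s ≤ 0 := by
        calc s ≤ 8 * p := hII
        _ = 0 := by rw [hp0]; ring
      exact hsne (le_zero_iff.1 h4)
    | succ k ih =>
      intro T hTc hTS hII hI hK
      set P := convexHull ℝ T with hPdef
      set p := volume P with hpdef
      set a := volume T with hadef
      have hPb : Bornology.IsBounded P := isBounded_convexHull.2 hTc.isBounded
      have hpfin : p ≠ ∞ := hPb.measure_lt_top.ne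
      have hp0 : p ≠ 0 := by
        intro h
        apply hsne
        apply le_zero_iff.1
        calc s ≤ 8 * p := hII
        _ = 0 := by rw [h]; ring
      have hθtop : s / p ≠ ∞ := (ENNReal.div_lt_top hstne hp0).ne
      have hθ8 : s / p ≤ 8 := by
        rw [ENNReal.div_le_iff hp0 hpfin]
        calc s ≤ 8 * p := hII
        _ = 8 * p := rfl
      have hws : w * ((s / p) ^ η * s) ≤ s := by
        calc w * ((s / p) ^ η * s) ≤ w * ((8:ℝ≥0∞) ^ η * s) :=
              mul_le_mul_right (mul_le_mul_left (ENNReal.rpow_le_rpow hθ8 hη.le) s) w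
        _ = (w * (8:ℝ≥0∞) ^ η) * s := by ring
        _ = s := by rw [hw8, one_mul]
      have h16s : 16 * s ≤ 64 * a := by
        have h1 : 16 * s + s ≤ 64 * a + s := by
          calc 16 * s + s = 17 * s := by ring
          _ ≤ 64 * a + w * ((s / p) ^ η * s) := hI
          _ ≤ 64 * a + s := add_le_add_right hws _
        exact (ENNReal.add_le_add_iff_right hstne).1 h1
      have ha0 : a ≠ 0 := by
        intro h
        apply hsne
        apply le_zero_iff.1
        have h1 : 16 * s ≤ 0 := by
          calc 16 * s ≤ 64 * a := h16s
          _ = 0 := by rw [h]; ring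
        have h2 : (16:ℝ≥0∞) * s = 0 := le_zero_iff.1 h1
        have := (mul_eq_zero.1 h2).resolve_left (by norm_num)
        rw [this]
      have hppos : 0 < p := by
        refine lt_of_lt_of_le (pos_iff_ne_zero.2 ha0) (measure_mono (subset_convexHull ℝ T))
      by_cases hgood : ∀ 𝒞' ⊆ P, Convex ℝ 𝒞' → volume 𝒞' ≤ p / 2 →
          ENNReal.ofReal c * (s / p) ^ η * s ≤ volume (S ∩ (P \ 𝒞'))
      · exact ⟨P, convex_convexHull ℝ T, hPb, hppos, hgood⟩
      · push_neg at hgood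
        obtain ⟨C', hC'P, hC'c, hC'half, hbad⟩ := hgood
        set T' := T ∩ closure C' with hT'def
        have hT'c : IsCompact T' := hTc.inter_right isClosed_closure
        have hT'S : T' ⊆ S := fun x hx => hTS hx.1
        set P' := convexHull ℝ T' with hP'def
        set p' := volume P' with hp'def
        set a' := volume T' with ha'def
        have hclvol : volume (closure C') ≤ volume C' := by
          calc volume (closure C') ≤ volume (C' ∪ frontier C') := by
                apply measure_mono
                intro x hx
                by_cases hxc : x ∈ C'
                · exact Or.inl hxc
                · exact Or.inr ⟨hx, fun hi => hxc (interior_subset hi)⟩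
          _ ≤ volume C' + volume (frontier C') := measure_union_le _ _
          _ = volume C' := by rw [hC'c.addHaar_frontier volume, add_zero]
        have hhalf : 2 * p' ≤ p := by
          have h1 : p' ≤ p / 2 := by
            calc p' ≤ volume (closure C') :=
                  measure_mono (convexHull_min (Set.inter_subset_right) hC'c.closure)
            _ ≤ volume C' := hclvol
            _ ≤ p / 2 := hC'half
          calc 2 * p' ≤ 2 * (p / 2) := mul_le_mul_right h1 2
          _ = p := ENNReal.mul_div_cancel' (by norm_num) (by norm_num)
        set τ : ℝ≥0∞ := u * ((s / p) ^ η * s) with hτdef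
        have hbad' : volume (S ∩ (P \ C')) < τ := by
          rw [hτdef, hudef, ← mul_assoc]; exact hbad
        have hdiffsub : T \ closure C' ⊆ S ∩ (P \ C') := fun x hx =>
          ⟨hTS hx.1, subset_convexHull ℝ T hx.1, fun hxc => hx.2 (subset_closure hxc)⟩
        have haa' : a ≤ a' + τ := by
          calc a ≤ volume (T' ∪ (T \ closure C')) := measure_mono (fun x hx => by
                by_cases hxc : x ∈ closure C'
                · exact Or.inl ⟨hx, hxc⟩
                · exact Or.inr ⟨hx, hxc⟩)
          _ ≤ a' + volume (T \ closure C') := measure_union_le _ _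
          _ ≤ a' + τ := add_le_add_right
                (le_of_lt (lt_of_le_of_lt (measure_mono hdiffsub) hbad')) _
        have h64τ : 64 * τ ≤ s := by
          calc 64 * τ = (64 * u) * ((s/p)^η * s) := by rw [hτdef]; ring
          _ = D * (w * ((s/p)^η * s)) := by rw [huD]; ring
          _ ≤ 1 * (w * ((s/p)^η * s)) := mul_le_mul_left hD1 _
          _ = w * ((s/p)^η * s) := one_mul _
          _ ≤ s := hws
        have h15 : 15 * s ≤ 64 * a' := by
          have h1 : 15 * s + s ≤ 64 * a' + s := by
            calc 15 * s + s = 16 * s := by ring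
            _ ≤ 64 * a := h16s
            _ ≤ 64 * (a' + τ) := mul_le_mul_right haa' _
            _ = 64 * a' + 64 * τ := by ring
            _ ≤ 64 * a' + s := add_le_add_right h64τ _
          exact (ENNReal.add_le_add_iff_right hstne).1 h1
        have hsa' : s ≤ 8 * a' := by
          have h2 : 8 * s ≤ 8 * (8 * a') := by
            calc 8 * s ≤ 15 * s := mul_le_mul_left (by norm_num) s
            _ ≤ 64 * a' := h15
            _ = 8 * (8 * a') := by ring
          exact (ENNReal.mul_le_mul_iff_right (by norm_num) (by norm_num)).1 h2
        have hII' : s ≤ 8 * p' :=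
          hsa'.trans (mul_le_mul_right (measure_mono (subset_convexHull ℝ T')) 8)
        have hinv : 2 * (s / p) ≤ s / p' := by
          by_cases hp'0 : p' = 0
          · rw [hp'0, ENNReal.div_zero hsne]; exact le_top
          · have hpinv : (p:ℝ≥0∞)⁻¹ ≤ 2⁻¹ * p'⁻¹ := by
              rw [← ENNReal.mul_inv (Or.inl (by norm_num)) (Or.inl (by norm_num))]
              exact ENNReal.inv_le_inv.2 hhalf
            calc 2 * (s / p) = s * (2 * p⁻¹) := by
                  rw [div_eq_mul_inv]; ring
            _ ≤ s * (2 * (2⁻¹ * p'⁻¹)) := by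
                  exact mul_le_mul_right (mul_le_mul_right hpinv 2) s
            _ = s * p'⁻¹ := by
                  rw [← mul_assoc 2 2⁻¹ _, ENNReal.mul_inv_cancel (by norm_num) (by norm_num),
                    one_mul]
            _ = s / p' := (div_eq_mul_inv _ _).symm
        have hr : (2:ℝ≥0∞) ^ η * (s/p) ^ η ≤ (s/p') ^ η := by
          rw [← ENNReal.mul_rpow_of_ne_top (by norm_num) hθtop]
          exact ENNReal.rpow_le_rpow hinv hη.le
        have hI' : 17 * s ≤ 64 * a' + w * ((s / p') ^ η * s) := by
          calc 17 * s ≤ 64 * a + w * ((s/p)^η * s) := hI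
          _ ≤ 64 * (a' + τ) + w * ((s/p)^η * s) :=
                add_le_add_left (mul_le_mul_right haa' 64) _
          _ = 64 * a' + ((64 * u) * ((s/p)^η * s) + w * ((s/p)^η * s)) := by
                rw [hτdef]; ring
          _ = 64 * a' + (w * (1 + D)) * ((s/p)^η * s) := by rw [huD]; ring
          _ ≤ 64 * a' + (w * (2:ℝ≥0∞)^η) * ((s/p)^η * s) :=
                add_le_add_right (mul_le_mul_left (mul_le_mul_right h2D w) _) _
          _ = 64 * a' + w * (((2:ℝ≥0∞)^η * (s/p)^η) * s) := by ring
          _ ≤ 64 * a' + w * ((s/p')^η * s) :=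
                add_le_add_right (mul_le_mul_right (mul_le_mul_left hr s) w) _
        have hK' : 16 * p' ≤ 2 ^ k * s := by
          have h1 : 2 * (16 * p') ≤ 2 * (2 ^ k * s) := by
            calc 2 * (16 * p') = 16 * (2 * p') := by ring
            _ ≤ 16 * p := mul_le_mul_right hhalf 16
            _ ≤ 2 ^ (k+1) * s := hK
            _ = 2 * (2 ^ k * s) := by ring
          exact (ENNReal.mul_le_mul_iff_right (by norm_num) (by norm_num)).1 h1
        exact ih T' hT'c hT'S hII' hI' hK'
  -- initial compact subset
  obtain ⟨T₀, hT₀S, hT₀c, hT₀⟩ := hS.exists_isCompact_lt_add hstne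
    (show s / 2 ≠ 0 by simp [ENNReal.div_eq_zero_iff, hsne])
  set a₀ := volume T₀ with ha₀def
  have hstart : s ≤ 2 * a₀ := by
    have h1 : s + s ≤ 2 * a₀ + s := by
      calc s + s = 2 * s := by ring
      _ ≤ 2 * (a₀ + s / 2) := mul_le_mul_right hT₀.le 2
      _ = 2 * a₀ + 2 * (s / 2) := by ring
      _ = 2 * a₀ + s := by rw [ENNReal.mul_div_cancel' (by norm_num) (by norm_num)]
    exact (ENNReal.add_le_add_iff_right hstne).1 h1
  set P₀ := convexHull ℝ T₀ with hP₀def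
  set p₀ := volume P₀ with hp₀def
  have hp₀fin : p₀ ≠ ∞ := ((isBounded_convexHull.2 hT₀c.isBounded).measure_lt_top).ne
  have ha₀p₀ : a₀ ≤ p₀ := measure_mono (subset_convexHull ℝ T₀)
  have hII₀ : s ≤ 8 * p₀ := by
    calc s ≤ 2 * a₀ := hstart
    _ ≤ 8 * p₀ := by
        calc 2 * a₀ ≤ 8 * a₀ := mul_le_mul_left (by norm_num) a₀
        _ ≤ 8 * p₀ := mul_le_mul_right ha₀p₀ 8
  have hI₀ : 17 * s ≤ 64 * a₀ + w * ((s / p₀) ^ η * s) := by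
    calc 17 * s ≤ 32 * s := mul_le_mul_left (by norm_num) s
    _ ≤ 32 * (2 * a₀) := mul_le_mul_right hstart 32
    _ = 64 * a₀ := by ring
    _ ≤ 64 * a₀ + w * ((s / p₀) ^ η * s) := le_self_add
  obtain ⟨m, hm⟩ := ENNReal.exists_nat_gt
    (show 16 * p₀ / s ≠ ∞ from (ENNReal.div_lt_top (ENNReal.mul_ne_top (by norm_num) hp₀fin) hsne).ne)
  have hK₀ : 16 * p₀ ≤ 2 ^ m * s := by
    have h1 : 16 * p₀ = 16 * p₀ / s * s := (ENNReal.div_mul_cancel hsne hstne).symm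
    calc 16 * p₀ = 16 * p₀ / s * s := h1
    _ ≤ (m : ℝ≥0∞) * s := mul_le_mul_left hm.le s
    _ ≤ 2 ^ m * s := by
        refine mul_le_mul_left ?_ s
        calc (m : ℝ≥0∞) ≤ ((2 ^ m : ℕ) : ℝ≥0∞) := by
              exact_mod_cast (Nat.lt_two_pow_self (n := m)).le
        _ = 2 ^ m := by push_cast; ring
  exact key m T₀ hT₀c hT₀S hII₀ hI₀ hK₀
end
end

section
/- For any integer n ≥ 1 and any η > 0 there exists c > 0 with the following property: for any Lebesgue measurable set S ⊆ ℝ^n satisfying 0 < |S| < ∞ there exists a bounded balanced convex set 𝒞 ⊆ ℝ^n of positive measure such that for every balanced convex subset 𝒞' ⊆ 𝒞 with |𝒞'| ≤ |𝒞|/2 one has |S ∩ (𝒞 \ 𝒞')| ≥ c (|S|/|𝒞|)^η |S|. -/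
open MeasureTheory ENNReal Pointwise

noncomputable section

/-- approximation by balanced convex sets: given `n ≥ 1` and
`η > 0`, any set `S` of positive finite measure admits a bounded balanced
convex set `𝒞` (balanced: `x ∈ 𝒞 → -x ∈ 𝒞`) such that removing any balanced
convex `𝒞' ⊆ 𝒞` of at most half the measure of `𝒞` still leaves at least
`c (|S|/|𝒞|)^η |S|` of `S` inside `𝒞 \ 𝒞'`. -/
theorem stmt14 (n : ℕ) (hn : 1 ≤ n) (η : ℝ) (hη : 0 < η) :
    ∃ c : ℝ, 0 < c ∧
      ∀ (S : Set (Fin n → ℝ)), MeasurableSet S → 0 < volume S → volume S < ⊤ →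
        ∃ 𝒞 : Set (Fin n → ℝ),
          Convex ℝ 𝒞 ∧ Bornology.IsBounded 𝒞 ∧ (∀ x ∈ 𝒞, -x ∈ 𝒞) ∧ 0 < volume 𝒞 ∧
          ∀ 𝒞' ⊆ 𝒞, Convex ℝ 𝒞' → (∀ x ∈ 𝒞', -x ∈ 𝒞') → volume 𝒞' ≤ volume 𝒞 / 2 →
            ENNReal.ofReal c * (volume S / volume 𝒞) ^ η * volume S ≤
              volume (S ∩ (𝒞 \ 𝒞')) := by
  classical
  -- the geometric ratio `q = (1/2)^η < 1`
  set q : ℝ≥0∞ := ((2 : ℝ≥0∞)⁻¹) ^ η with hqdef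
  have hq_lt : q < 1 := ENNReal.rpow_lt_one (by norm_num) hη
  have h2η_ne_top : ((2 : ℝ≥0∞)) ^ η ≠ ⊤ :=
    ENNReal.rpow_ne_top_of_nonneg hη.le (by norm_num)
  have h2η_ne_zero : ((2 : ℝ≥0∞)) ^ η ≠ 0 :=
    (ENNReal.rpow_pos (by norm_num) (by norm_num)).ne'
  have h1q_ne : (1 - q) ≠ 0 := (tsub_pos_of_lt hq_lt).ne'
  have h1q_ne_top : (1 - q) ≠ ⊤ := ne_top_of_le_ne_top ENNReal.one_ne_top tsub_le_self
  set D : ℝ≥0∞ := (2 : ℝ≥0∞) ^ η * (1 - q)⁻¹ with hDdef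
  have hD_ne_top : D ≠ ⊤ := ENNReal.mul_ne_top h2η_ne_top (ENNReal.inv_ne_top.2 h1q_ne)
  have hD_ne_zero : D ≠ 0 := mul_ne_zero h2η_ne_zero (ENNReal.inv_ne_zero.2 h1q_ne_top)
  have hDr : 0 < D.toReal := ENNReal.toReal_pos hD_ne_zero hD_ne_top
  set c : ℝ := (8 * D.toReal)⁻¹ with hcdef
  have hc : 0 < c := by positivity
  refine ⟨c, hc, ?_⟩
  intro S hS hS0 hStop
  by_contra hcon
  push_neg at hcon
  set s : ℝ≥0∞ := volume S with hs
  have hs0 : s ≠ 0 := hS0.ne'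
  have hstop : s ≠ ⊤ := hStop.ne
  have hs4_0 : s / 4 ≠ 0 := (ENNReal.div_pos hs0 (by norm_num)).ne'
  have hs4top : s / 4 ≠ ⊤ := (ENNReal.div_lt_top hstop (by norm_num)).ne
  -- the best mass captured by a balanced convex body of volume at most `V`
  set m : ℝ≥0∞ → ℝ≥0∞ := fun V => ⨆ (K : Set (Fin n → ℝ)) (_ : Convex ℝ K ∧
    Bornology.IsBounded K ∧ (∀ x ∈ K, -x ∈ K) ∧ volume K ≤ V), volume (S ∩ K) with hmdef
  have m_le : ∀ V, m V ≤ V := fun V =>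
    iSup₂_le fun K hK => le_trans (measure_mono Set.inter_subset_right) hK.2.2.2
  have m_ge : ∀ V (K : Set (Fin n → ℝ)), Convex ℝ K → Bornology.IsBounded K →
      (∀ x ∈ K, -x ∈ K) → volume K ≤ V → volume (S ∩ K) ≤ m V := fun V K h1 h2 h3 h4 =>
    le_iSup₂_of_le K ⟨h1, h2, h3, h4⟩ le_rfl
  -- Key step: from the negated conclusion, `m` grows slowly
  have key : ∀ V : ℝ≥0∞, V ≠ 0 → V ≠ ⊤ →
      m V ≤ m (V / 2) + ENNReal.ofReal c * (s / V) ^ η * s := by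
    intro V hV0 hVtop
    refine iSup₂_le fun K hK => ?_
    obtain ⟨hKc, hKb, hKbal, hKV⟩ := hK
    by_cases h0 : volume (S ∩ K) = 0
    · simp [h0]
    have hK0 : volume K ≠ 0 := fun h => h0 (measure_mono_null Set.inter_subset_right h)
    have hKtop : volume K ≠ ⊤ := hKb.measure_lt_top.ne
    obtain ⟨x₀, hx₀⟩ : K.Nonempty := nonempty_of_measure_ne_zero hK0
    have h0K : (0 : Fin n → ℝ) ∈ K := by
      have := hKc hx₀ (hKbal x₀ hx₀) (by norm_num : (0:ℝ) ≤ 1/2)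
        (by norm_num : (0:ℝ) ≤ 1/2) (by norm_num)
      simpa using this
    set vK : ℝ := (volume K).toReal with hvKdef
    have hvK : 0 < vK := ENNReal.toReal_pos hK0 hKtop
    set Vr : ℝ := V.toReal with hVrdef
    have hVr : 0 < Vr := ENNReal.toReal_pos hV0 hVtop
    have hlevk : vK ≤ Vr := (ENNReal.toReal_le_toReal hKtop hVtop).mpr hKV
    set lam : ℝ := (Vr / vK) ^ ((n : ℝ)⁻¹) with hlamdef
    have hlam1 : 1 ≤ lam := Real.one_le_rpow ((one_le_div hvK).2 hlevk) (by positivity)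
    have hlam0 : 0 < lam := lt_of_lt_of_le one_pos hlam1
    set C : Set (Fin n → ℝ) := lam • K with hCdef
    have hCvol : volume C = V := by
      rw [hCdef, Measure.addHaar_smul_of_nonneg volume hlam0.le K]
      have hrank : Module.finrank ℝ (Fin n → ℝ) = n := by simp
      rw [hrank, hlamdef, Real.rpow_inv_natCast_pow (by positivity) (by omega),
        ENNReal.ofReal_div_of_pos hvK, hvKdef, hVrdef,
        ENNReal.ofReal_toReal hVtop, ENNReal.ofReal_toReal hKtop]
      exact ENNReal.div_mul_cancel hK0 hKtop
    have hKsub : K ⊆ C := by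
      intro x hx
      refine ⟨lam⁻¹ • x, ?_, smul_inv_smul₀ hlam0.ne' x⟩
      have h := hKc h0K hx (sub_nonneg.2 (inv_le_one_of_one_le₀ hlam1))
        (inv_nonneg.2 hlam0.le) (by ring)
      simpa using h
    obtain ⟨C', hC'sub, hC'conv, hC'bal, hC'half, hC'lt⟩ :=
      hcon C (hKc.smul lam) (hKb.smul₀ lam)
        (by rintro x ⟨y, hy, rfl⟩; exact ⟨-y, hKbal y hy, by simp⟩)
        (by rw [hCvol]; exact pos_iff_ne_zero.2 hV0)
    have step1 : volume (S ∩ K) ≤ volume (S ∩ C') + volume (S ∩ (C \ C')) := by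
      refine le_trans (measure_mono ?_) (measure_union_le _ _)
      intro x hx
      obtain ⟨hxS, hxK⟩ := hx
      by_cases hx' : x ∈ C'
      · exact Or.inl ⟨hxS, hx'⟩
      · exact Or.inr ⟨hxS, hKsub hxK, hx'⟩
    have step2 : volume (S ∩ C') ≤ m (V / 2) :=
      m_ge _ _ hC'conv ((hKb.smul₀ lam).subset hC'sub) hC'bal
        (by rw [← hCvol]; exact hC'half)
    have step3 : volume (S ∩ (C \ C')) ≤ ENNReal.ofReal c * (s / V) ^ η * s := by
      rw [← hCvol]; exact hC'lt.le
    exact le_trans step1 (add_le_add step2 step3)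
  -- the doubling sequence of volumes
  set Vk : ℕ → ℝ≥0∞ := fun k => 2 ^ k * (s / 4) with hVkdef
  have hVk0 : ∀ k, Vk k ≠ 0 := fun k =>
    mul_ne_zero (pow_ne_zero k (by norm_num)) hs4_0
  have hVktop : ∀ k, Vk k ≠ ⊤ := fun k =>
    ENNReal.mul_ne_top (ENNReal.pow_ne_top ENNReal.ofNat_ne_top) hs4top
  have hhalf : ∀ k, Vk (k + 1) / 2 = Vk k := by
    intro k
    show 2 ^ (k + 1) * (s / 4) / 2 = 2 ^ k * (s / 4)
    calc 2 ^ (k + 1) * (s / 4) / 2 = 2 ^ k * (s / 4) * 2 / 2 := by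
          rw [pow_succ]; ring_nf
      _ = 2 ^ k * (s / 4) * (2 / 2) := mul_div_assoc _ _ _
      _ = 2 ^ k * (s / 4) := by
          rw [ENNReal.div_self (by norm_num) ENNReal.ofNat_ne_top, mul_one]
  have hratio : ∀ k : ℕ, (s / Vk (k + 1)) ^ η = 2 ^ η * q ^ k := by
    intro k
    have h1 : s / Vk (k + 1) = 2 * ((2 : ℝ≥0∞)⁻¹) ^ k := by
      show s / (2 ^ (k+1) * (s / 4)) = 2 * ((2 : ℝ≥0∞)⁻¹) ^ k
      rw [div_eq_mul_inv s 4, show (2:ℝ≥0∞) ^ (k+1) * (s * 4⁻¹) = s * (2 ^ (k+1) * 4⁻¹) by ring,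
        div_eq_mul_inv,
        ENNReal.mul_inv (Or.inl hs0) (Or.inl hstop), ← mul_assoc,
        ENNReal.mul_inv_cancel hs0 hstop, one_mul,
        ENNReal.mul_inv (Or.inl (pow_ne_zero _ (by norm_num)))
          (Or.inl (ENNReal.pow_ne_top ENNReal.ofNat_ne_top)), inv_inv,
        ENNReal.inv_pow, pow_succ, mul_assoc, mul_comm ((2:ℝ≥0∞)⁻¹ ^ k)]
      congr 1
      rw [show (4:ℝ≥0∞) = 2 * 2 by norm_num, ← mul_assoc,
        ENNReal.inv_mul_cancel (by norm_num) ENNReal.ofNat_ne_top, one_mul]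
    rw [h1, ENNReal.mul_rpow_of_ne_top ENNReal.ofNat_ne_top
      (ENNReal.pow_ne_top (by simp : (2:ℝ≥0∞)⁻¹ ≠ ⊤)),
      ← ENNReal.rpow_natCast ((2:ℝ≥0∞)⁻¹) k, ← ENNReal.rpow_mul, mul_comm (k:ℝ) η,
      ENNReal.rpow_mul, ENNReal.rpow_natCast, hqdef]
  -- the telescoped bound
  have bound : ∀ k, m (Vk k) ≤ s / 4 +
      ENNReal.ofReal c * 2 ^ η * (∑ i ∈ Finset.range k, q ^ i) * s := by
    intro k
    induction k with
    | zero =>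
      have h1 : Vk 0 = s / 4 := by show 2 ^ 0 * (s / 4) = s / 4; rw [pow_zero, one_mul]
      calc m (Vk 0) ≤ Vk 0 := m_le _
        _ = s / 4 := h1
        _ ≤ _ := by simp
    | succ k ih =>
      have h1 := key (Vk (k + 1)) (hVk0 _) (hVktop _)
      rw [hhalf k, hratio k] at h1
      refine h1.trans ?_
      calc m (Vk k) + ENNReal.ofReal c * (2 ^ η * q ^ k) * s
          ≤ (s / 4 + ENNReal.ofReal c * 2 ^ η * (∑ i ∈ Finset.range k, q ^ i) * s) +
            ENNReal.ofReal c * (2 ^ η * q ^ k) * s := add_le_add_left ih _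
        _ = s / 4 + ENNReal.ofReal c * 2 ^ η *
            ((∑ i ∈ Finset.range k, q ^ i) + q ^ k) * s := by ring
        _ = _ := by rw [Finset.sum_range_succ]
  -- uniform bound `m ≤ (3/8) s`
  have bound' : ∀ k, m (Vk k) ≤ (ENNReal.ofReal (1/4) + ENNReal.ofReal (1/8)) * s := by
    intro k
    refine (bound k).trans ?_
    have hsum : (∑ i ∈ Finset.range k, q ^ i) ≤ (1 - q)⁻¹ := by
      refine (ENNReal.sum_le_tsum _).trans ?_
      rw [ENNReal.tsum_geometric]
    have h8 : ENNReal.ofReal c * 2 ^ η * (1 - q)⁻¹ ≤ ENNReal.ofReal (1/8) := by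
      rw [mul_assoc, ← hDdef, ← ENNReal.ofReal_toReal hD_ne_top,
        ← ENNReal.ofReal_mul hc.le]
      apply ENNReal.ofReal_le_ofReal
      rw [hcdef]
      rw [inv_mul_eq_div, div_le_iff₀ (by positivity)]
      ring_nf
      nlinarith [hDr]
    have h4 : s / 4 = ENNReal.ofReal (1/4) * s := by
      rw [one_div, ENNReal.ofReal_inv_of_pos (by norm_num), ENNReal.ofReal_ofNat,
        ENNReal.div_eq_inv_mul]
    rw [h4, add_mul]
    refine add_le_add le_rfl ?_
    calc ENNReal.ofReal c * 2 ^ η * (∑ i ∈ Finset.range k, q ^ i) * s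
        ≤ ENNReal.ofReal c * 2 ^ η * (1 - q)⁻¹ * s :=
          mul_le_mul_left (mul_le_mul_right hsum _) s
      _ ≤ ENNReal.ofReal (1/8) * s := mul_le_mul_left h8 s
  -- but balls capture almost all of `s`: contradiction
  have hlt : (ENNReal.ofReal (1/4) + ENNReal.ofReal (1/8)) * s < s := by
    rw [← ENNReal.ofReal_add (by norm_num) (by norm_num)]
    calc ENNReal.ofReal (1/4 + 1/8) * s < 1 * s :=
          (ENNReal.mul_lt_mul_iff_left hs0 hstop).2 (ENNReal.ofReal_lt_one.2 (by norm_num))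
      _ = s := one_mul s
  have htend : Filter.Tendsto (fun R : ℕ => volume (S ∩ Metric.closedBall 0 R))
      Filter.atTop (nhds s) := by
    have hmono : Monotone (fun R : ℕ => S ∩ Metric.closedBall (0 : Fin n → ℝ) R) :=
      fun a b hab => Set.inter_subset_inter_right _
        (Metric.closedBall_subset_closedBall (by exact_mod_cast hab))
    have h := tendsto_measure_iUnion_atTop (μ := volume) hmono
    rwa [← Set.inter_iUnion, Metric.iUnion_closedBall_nat, Set.inter_univ] at h
  obtain ⟨R, hR⟩ := (htend.eventually_const_lt hlt).exists
  set W := volume (Metric.closedBall (0 : Fin n → ℝ) R) with hWdef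
  have hWtop : W ≠ ⊤ := Metric.isBounded_closedBall.measure_lt_top.ne
  obtain ⟨k, hk⟩ := ENNReal.exists_nat_gt (ENNReal.div_lt_top hWtop hs4_0).ne
  have hk2 : W ≤ Vk k := by
    have h1 : ((k : ℕ) : ℝ≥0∞) ≤ 2 ^ k := by exact_mod_cast (Nat.lt_two_pow_self (n := k)).le
    have h2 : W / (s / 4) ≤ 2 ^ k := le_trans hk.le h1
    have h3 := (ENNReal.div_le_iff_le_mul (Or.inl hs4_0) (Or.inl hs4top)).1 h2
    exact h3
  have hfinal : volume (S ∩ Metric.closedBall 0 R) ≤ m (Vk k) :=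
    m_ge _ _ (convex_closedBall _ _) Metric.isBounded_closedBall
      (fun x hx => by
        rw [Metric.mem_closedBall, dist_zero_right] at hx ⊢
        rwa [norm_neg]) hk2
  exact absurd (hfinal.trans (bound' k)) (not_le.2 hR)
end
end

section
/- There exist constants C, A < ∞, depending only on d, such that for any δ ∈ (0, 1] and any ball ℬ = ℬ(z̄, e, r, r*), there exists a finite family {ℬ_j : j ∈ J} of balls of the same type (each of the form ℬ(z_j, e^{(j)}, r^{(j)}, r*^{(j)})) such that ℬ ⊆ ⋃_{j∈J} ℬ_j, the cardinality of J is at most C δ^{−A}, and for every j ∈ J one has |π(ℬ_j)| = δ |π(ℬ)| and |π*(ℬ_j)| = δ |π*(ℬ)|. -/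
open MeasureTheory ENNReal
open scoped RealInnerProductSpace

noncomputable section

open scoped Pointwise

lemma fst_image {n : ℕ} {zb : Pt n × Pt n} {e : Fin n → Vec n} {r rs : Fin n → ℝ} {ρ : ℝ}
    (H : IsBallParams n zb e r rs ρ) :
    Prod.fst '' ballI n zb e r rs ρ =
      {x : Pt n | (∀ j, |⟪x.1 - zb.1.1, e j⟫| < r j) ∧
        |x.2 - zb.2.2 - ‖x.1 - zb.2.1‖ ^ 2| < ρ} := by
  obtain ⟨hinc, hρ, he, hr, hrs, hrrs⟩ := H
  ext x
  constructor
  · rintro ⟨z, ⟨h1, h2, h3, h4, h5⟩, rfl⟩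
    exact ⟨h2, h3⟩
  · rintro ⟨h2, h3⟩
    refine ⟨(x, (zb.2.1, x.2 - ‖zb.2.1 - x.1‖^2)), ⟨rfl, h2, h3, ?_, ?_⟩, rfl⟩
    · intro j; simpa using hrs j
    · have : x.2 - ‖zb.2.1 - x.1‖ ^ 2 - zb.1.2 + ‖zb.2.1 - zb.1.1‖ ^ 2
          = x.2 - zb.2.2 - ‖x.1 - zb.2.1‖ ^ 2 := by
        rw [hinc, norm_sub_rev (zb.2.1)]; ring
      rw [this]; exact h3

lemma snd_image {n : ℕ} {zb : Pt n × Pt n} {e : Fin n → Vec n} {r rs : Fin n → ℝ} {ρ : ℝ}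
    (H : IsBallParams n zb e r rs ρ) :
    Prod.snd '' ballI n zb e r rs ρ =
      {y : Pt n | (∀ j, |⟪y.1 - zb.2.1, e j⟫| < rs j) ∧
        |y.2 - zb.1.2 + ‖y.1 - zb.1.1‖ ^ 2| < ρ} := by
  obtain ⟨hinc, hρ, he, hr, hrs, hrrs⟩ := H
  ext y
  constructor
  · rintro ⟨z, ⟨h1, h2, h3, h4, h5⟩, rfl⟩
    exact ⟨h4, h5⟩
  · rintro ⟨h4, h5⟩
    refine ⟨((zb.1.1, y.2 + ‖y.1 - zb.1.1‖^2), y), ⟨by ring_nf, ?_, ?_, h4, h5⟩, rfl⟩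
    · intro j; simpa using hr j
    · have : y.2 + ‖y.1 - zb.1.1‖ ^ 2 - zb.2.2 - ‖zb.1.1 - zb.2.1‖ ^ 2
          = y.2 - zb.1.2 + ‖y.1 - zb.1.1‖ ^ 2 := by
        rw [hinc, norm_sub_rev (zb.1.1)]; ring
      rw [this]; exact h5

lemma vol_slab_s17 {n : ℕ} (S : Set (Vec n)) (hS : MeasurableSet S) (f : Vec n → ℝ)
    (hf : Measurable f) (ρ : ℝ) :
    volume {x : Pt n | x.1 ∈ S ∧ |x.2 - f x.1| < ρ} = ENNReal.ofReal (2*ρ) * volume S := by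
  have hA : MeasurableSet {x : Pt n | x.1 ∈ S ∧ |x.2 - f x.1| < ρ} := by
    apply MeasurableSet.inter
    · exact measurable_fst hS
    · exact measurableSet_lt ((measurable_snd.sub (hf.comp measurable_fst)).abs) measurable_const
  rw [Measure.volume_eq_prod, Measure.prod_apply hA]
  have hker : ∀ y : Vec n, (volume (Prod.mk y ⁻¹' {x : Pt n | x.1 ∈ S ∧ |x.2 - f x.1| < ρ}))
      = S.indicator (fun _ => ENNReal.ofReal (2*ρ)) y := by
    intro y
    by_cases hy : y ∈ S
    · have : Prod.mk y ⁻¹' {x : Pt n | x.1 ∈ S ∧ |x.2 - f x.1| < ρ}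
          = Set.Ioo (f y - ρ) (f y + ρ) := by
        ext t
        simp only [Set.mem_preimage, Set.mem_setOf_eq, Set.mem_Ioo, hy, true_and, abs_sub_lt_iff]
        constructor <;> rintro ⟨u, v⟩ <;> constructor <;> linarith
      rw [this, Real.volume_Ioo, Set.indicator_of_mem hy]
      congr 1; ring
    · have : Prod.mk y ⁻¹' {x : Pt n | x.1 ∈ S ∧ |x.2 - f x.1| < ρ} = ∅ := by
        ext t; simp [hy]
      rw [this, Set.indicator_of_notMem hy, measure_empty]
  rw [lintegral_congr hker, lintegral_indicator hS, setLIntegral_const, mul_comm]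

def box {n : ℕ} (e : Fin n → Vec n) (r : Fin n → ℝ) : Set (Vec n) :=
  {y : Vec n | ∀ j, |⟪y, e j⟫| < r j}

lemma box_measurable {n : ℕ} (e : Fin n → Vec n) (r : Fin n → ℝ) :
    MeasurableSet (box e r) := by
  have : box e r = ⋂ j, {y : Vec n | |⟪y, e j⟫| < r j} := by
    ext y; simp [box]
  rw [this]
  apply MeasurableSet.iInter
  intro j
  exact measurableSet_lt ((Continuous.inner continuous_id continuous_const).abs.measurable) measurable_const

lemma box_shift {n : ℕ} (e : Fin n → Vec n) (r : Fin n → ℝ) (c : Vec n) :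
    {y : Vec n | ∀ j, |⟪y - c, e j⟫| < r j} = (fun y => y + (-c)) ⁻¹' box e r := by
  ext y; simp [box, sub_eq_add_neg]

lemma vol_box_shift {n : ℕ} (e : Fin n → Vec n) (r : Fin n → ℝ) (c : Vec n) :
    volume {y : Vec n | ∀ j, |⟪y - c, e j⟫| < r j} = volume (box e r) := by
  rw [box_shift]
  exact measure_preimage_add_right volume (-c) (box e r)

lemma box_smul {n : ℕ} (e : Fin n → Vec n) (r : Fin n → ℝ) (l : ℝ) (hl : 0 < l) :
    box e (fun j => l * r j) = l • box e r := by
  ext y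
  rw [Set.mem_smul_set_iff_inv_smul_mem₀ hl.ne']
  simp only [box, Set.mem_setOf_eq, inner_smul_left, RCLike.conj_to_real]
  constructor <;> intro h j <;> have := h j
  · rw [abs_mul, abs_inv, abs_of_pos hl, inv_mul_lt_iff₀ hl]
    exact this
  · rw [abs_mul, abs_inv, abs_of_pos hl, inv_mul_lt_iff₀ hl] at this
    exact this

lemma vol_box_smul {n : ℕ} (e : Fin n → Vec n) (r : Fin n → ℝ) (l : ℝ) (hl : 0 < l) :
    volume (box e (fun j => l * r j)) = ENNReal.ofReal (l^n) * volume (box e r) := by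
  rw [box_smul e r l hl, Measure.addHaar_smul]
  congr 2
  rw [abs_of_nonneg (by positivity), finrank_euclideanSpace_fin]

lemma vol_fst {n : ℕ} {zb : Pt n × Pt n} {e : Fin n → Vec n} {r rs : Fin n → ℝ} {ρ : ℝ}
    (H : IsBallParams n zb e r rs ρ) :
    volume (Prod.fst '' ballI n zb e r rs ρ) = ENNReal.ofReal (2*ρ) * volume (box e r) := by
  rw [fst_image H]
  have : {x : Pt n | (∀ j, |⟪x.1 - zb.1.1, e j⟫| < r j) ∧ |x.2 - zb.2.2 - ‖x.1 - zb.2.1‖ ^ 2| < ρ}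
      = {x : Pt n | x.1 ∈ {y : Vec n | ∀ j, |⟪y - zb.1.1, e j⟫| < r j} ∧
          |x.2 - (fun y => zb.2.2 + ‖y - zb.2.1‖^2) x.1| < ρ} := by
    ext x
    simp only [Set.mem_setOf_eq]
    constructor <;> rintro ⟨h1, h2⟩ <;> exact ⟨h1, by rw [show ∀ A B C : ℝ, A - (B + C) = A - B - C by intros; ring] at *; exact h2⟩
  have hmeas : MeasurableSet {y : Vec n | ∀ j, |⟪y - zb.1.1, e j⟫| < r j} := by
    rw [box_shift]
    exact (box_measurable e r).preimage (measurable_add_const _)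
  have hf : Measurable fun y : Vec n => zb.2.2 + ‖y - zb.2.1‖^2 :=
    measurable_const.add (((continuous_id.sub continuous_const).norm.pow 2).measurable)
  have h2 := vol_slab_s17 {y : Vec n | ∀ j, |⟪y - zb.1.1, e j⟫| < r j} hmeas
    (fun y => zb.2.2 + ‖y - zb.2.1‖^2) hf ρ
  rw [this, h2, vol_box_shift]

lemma vol_snd {n : ℕ} {zb : Pt n × Pt n} {e : Fin n → Vec n} {r rs : Fin n → ℝ} {ρ : ℝ}
    (H : IsBallParams n zb e r rs ρ) :
    volume (Prod.snd '' ballI n zb e r rs ρ) = ENNReal.ofReal (2*ρ) * volume (box e rs) := by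
  rw [snd_image H]
  have : {y : Pt n | (∀ j, |⟪y.1 - zb.2.1, e j⟫| < rs j) ∧ |y.2 - zb.1.2 + ‖y.1 - zb.1.1‖ ^ 2| < ρ}
      = {y : Pt n | y.1 ∈ {u : Vec n | ∀ j, |⟪u - zb.2.1, e j⟫| < rs j} ∧
          |y.2 - (fun u => zb.1.2 - ‖u - zb.1.1‖^2) y.1| < ρ} := by
    ext y
    simp only [Set.mem_setOf_eq]
    constructor <;> rintro ⟨h1, h2⟩ <;> exact ⟨h1, by rw [show ∀ A B C : ℝ, A - (B - C) = A - B + C by intros; ring] at *; exact h2⟩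
  have hmeas : MeasurableSet {u : Vec n | ∀ j, |⟪u - zb.2.1, e j⟫| < rs j} := by
    rw [box_shift]
    exact (box_measurable e rs).preimage (measurable_add_const _)
  have hf : Measurable fun u : Vec n => zb.1.2 - ‖u - zb.1.1‖^2 :=
    measurable_const.sub (((continuous_id.sub continuous_const).norm.pow 2).measurable)
  have h2 := vol_slab_s17 {u : Vec n | ∀ j, |⟪u - zb.2.1, e j⟫| < rs j} hmeas
    (fun u => zb.1.2 - ‖u - zb.1.1‖^2) hf ρ
  rw [this, h2, vol_box_shift]

lemma key_ident {n : ℕ} (p q w m : Vec n) :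
    ‖p - m‖^2 - ‖q - m‖^2 + ‖w - q‖^2 - ‖p - w‖^2 = 2 * ⟪p - q, w - m⟫ := by
  simp only [@norm_sub_sq_real, inner_sub_left, inner_sub_right,
    real_inner_comm w q, real_inner_comm w p, real_inner_comm m q, real_inner_comm m p]
  ring

lemma round_close (h T : ℝ) (hh : 0 < h) : |T - (round (T/h) : ℝ) * h| ≤ h / 2 := by
  have e1 : T - (round (T/h):ℝ)*h = (T/h - round (T/h)) * h := by field_simp
  rw [e1, abs_mul, abs_of_pos hh]
  nlinarith [abs_sub_round (T/h)]

lemma round_bdd (h T B : ℝ) (hh : 0 < h) (hB : |T| ≤ B) (K : ℤ) (hK : B / h ≤ (K:ℝ)) :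
    round (T/h) ∈ Finset.Icc (-K) K := by
  have h0 : |T/h| ≤ B/h := by rw [abs_div, abs_of_pos hh]; gcongr
  have h1 : |(round (T/h) : ℝ)| ≤ |T/h| + 1/2 := by
    have h2 := abs_sub_round (T/h)
    have h3 := abs_sub_abs_le_abs_sub (round (T/h) : ℝ) (T/h)
    rw [abs_sub_comm] at h3
    linarith
  have h4 : ((|round (T/h)| : ℤ) : ℝ) < (K : ℝ) + 1 := by
    push_cast
    calc |(round (T/h) : ℝ)| ≤ |T/h| + 1/2 := h1
      _ ≤ (K:ℝ) + 1/2 := by linarith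
      _ < (K:ℝ) + 1 := by linarith
  have h5 : |round (T/h)| ≤ K := Int.lt_add_one_iff.mp (by exact_mod_cast h4)
  rw [Finset.mem_Icc]
  exact ⟨neg_le_of_abs_le h5, le_of_abs_le h5⟩

-- orthonormal completeness
lemma inner_eq_sum {n : ℕ} {e : Fin n → Vec n} (he : Orthonormal ℝ e) (x y : Vec n) :
    ⟪x, y⟫ = ∑ j, ⟪x, e j⟫ * ⟪y, e j⟫ := by
  have hsp : ⊤ ≤ Submodule.span ℝ (Set.range e) := by
    rw [he.linearIndependent.span_eq_top_of_card_eq_finrank' (by simp)]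
  let b : OrthonormalBasis (Fin n) ℝ (Vec n) := OrthonormalBasis.mk he hsp
  have := b.sum_inner_mul_inner x y
  simp only [OrthonormalBasis.coe_mk, b] at this
  rw [← this]
  congr 1; funext j; rw [real_inner_comm (e j) y]

lemma inner_sum_coord {n : ℕ} {e : Fin n → Vec n} (he : Orthonormal ℝ e)
    (α : Fin n → ℝ) (j : Fin n) : ⟪∑ i, α i • e i, e j⟫ = α j := by
  rw [real_inner_comm]; exact he.inner_right_fintype α j

lemma inner_sum_right {n : ℕ} (x : Vec n) (e : Fin n → Vec n) (β : Fin n → ℝ) :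
    ⟪x, ∑ i, β i • e i⟫ = ∑ i, β i * ⟪x, e i⟫ := by
  rw [inner_sum]; congr 1; funext i; rw [real_inner_smul_right]

-- appended to t4
lemma mem_small_ball {n : ℕ} {e : Fin n → Vec n} (he : Orthonormal ℝ e)
    (xb xsb x1 x3 : Vec n) (xbd x2 σ ρ' : ℝ) (α β r' rs' : Fin n → ℝ)
    (h2 : ∀ j, |⟪x1 - xb, e j⟫ - α j| < r' j)
    (h4 : ∀ j, |⟪x3 - xsb, e j⟫ - β j| < rs' j)
    (h3 : |(x2 - (xbd - ‖xsb - xb‖^2) - ‖x1 - xsb‖^2) - σ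
          + 2*∑ i, (⟪x1 - xb, e i⟫ - α i) * β i| < ρ')
    (h5 : |(x2 - (xbd - ‖xsb - xb‖^2) - ‖x1 - xsb‖^2) - σ
          + 2*∑ i, (⟪x1 - xb, e i⟫ - α i) * ⟪x3 - xsb, e i⟫| < ρ') :
    ((x1, x2), (x3, x2 - ‖x3 - x1‖^2)) ∈ ballI n
      ((xb + ∑ i, α i • e i,
        (xbd - ‖xsb - xb‖^2) + ‖(xb + ∑ i, α i • e i) - xsb‖^2 + σ),
       (xsb + ∑ i, β i • e i,
        ((xbd - ‖xsb - xb‖^2) + ‖(xb + ∑ i, α i • e i) - xsb‖^2 + σ)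
          - ‖(xsb + ∑ i, β i • e i) - (xb + ∑ i, α i • e i)‖^2))
      e r' rs' ρ' := by
  set U := ∑ i, α i • e i with hU
  set V := ∑ i, β i • e i with hV
  set xc := xb + U with hxc
  set xcs := xsb + V with hxcs
  have hcU : ∀ i, ⟪x1 - xc, e i⟫ = ⟪x1 - xb, e i⟫ - α i := by
    intro i
    have h : x1 - xc = (x1 - xb) - U := by rw [hxc]; abel
    rw [h, inner_sub_left, hU, inner_sum_coord he]
  have hcV : ∀ i, ⟪x3 - xcs, e i⟫ = ⟪x3 - xsb, e i⟫ - β i := by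
    intro i
    have h : x3 - xcs = (x3 - xsb) - V := by rw [hxcs]; abel
    rw [h, inner_sub_left, hV, inner_sum_coord he]
  refine ⟨rfl, ?_, ?_, ?_, ?_⟩
  · intro j; rw [hcU j]; exact h2 j
  · -- third condition
    have key := key_ident x1 xc xcs xsb
    have hinner : ⟪x1 - xc, xcs - xsb⟫ = ∑ i, (⟪x1 - xb, e i⟫ - α i) * β i := by
      have h : xcs - xsb = V := by rw [hxcs]; abel
      rw [h, hV, inner_sum_right]
      exact Finset.sum_congr rfl fun i _ => by rw [hcU i]; ring
    rw [hinner] at key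
    have E : x2 - ((xbd - ‖xsb - xb‖^2) + ‖xc - xsb‖^2 + σ - ‖xcs - xc‖^2)
        - ‖x1 - xcs‖^2
        = (x2 - (xbd - ‖xsb - xb‖^2) - ‖x1 - xsb‖^2) - σ
          + 2*∑ i, (⟪x1 - xb, e i⟫ - α i) * β i := by linarith
    exact E ▸ h3
  · intro j; rw [hcV j]; exact h4 j
  · -- fifth condition
    have key := key_ident x1 xc x3 xsb
    have hinner : ⟪x1 - xc, x3 - xsb⟫ = ∑ i, (⟪x1 - xb, e i⟫ - α i) * ⟪x3 - xsb, e i⟫ := by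
      rw [inner_eq_sum he]
      exact Finset.sum_congr rfl fun i _ => by rw [hcU i]
    rw [hinner] at key
    have hrev : ‖x1 - x3‖ = ‖x3 - x1‖ := norm_sub_rev _ _
    have E : x2 - ‖x3 - x1‖^2 - ((xbd - ‖xsb - xb‖^2) + ‖xc - xsb‖^2 + σ)
        + ‖x3 - xc‖^2
        = (x2 - (xbd - ‖xsb - xb‖^2) - ‖x1 - xsb‖^2) - σ
          + 2*∑ i, (⟪x1 - xb, e i⟫ - α i) * ⟪x3 - xsb, e i⟫ := by
      rw [← hrev] at *; linarith
    exact E ▸ h5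
abbrev IndexT (K K2 : ℤ) (n : ℕ) : Type :=
  ((Fin n → {z : ℤ // z ∈ Finset.Icc (-K) K}) × (Fin n → {z : ℤ // z ∈ Finset.Icc (-K) K})
    × {z : ℤ // z ∈ Finset.Icc (-K2) K2})

lemma card_IndexT (K K2 : ℤ) (n : ℕ) :
    Fintype.card (IndexT K K2 n)
      = ((K + 1 - -K).toNat)^n * (((K + 1 - -K).toNat)^n * (K2 + 1 - -K2).toNat) := by
  delta IndexT
  simp only [Fintype.card_prod, Fintype.card_fun, Fintype.card_coe, Fintype.card_fin,
    Int.card_Icc]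

set_option maxHeartbeats 2000000 in
theorem main_cover (n : ℕ) :
    ∃ C A : ℝ, 0 < C ∧ 0 < A ∧
      ∀ (δ : ℝ), 0 < δ → δ ≤ 1 →
      ∀ (zb : Pt n × Pt n) (e : Fin n → Vec n)
        (r rs : Fin n → ℝ) (ρ : ℝ), IsBallParams n zb e r rs ρ →
        ∃ (m : ℕ) (zbs : Fin m → Pt n × Pt n)
          (es : Fin m → Fin n → Vec n)
          (rj rsj : Fin m → Fin n → ℝ) (ρs : Fin m → ℝ),
          (m : ℝ) ≤ C * δ ^ (-A) ∧
          (∀ j, IsBallParams n (zbs j) (es j) (rj j) (rsj j) (ρs j)) ∧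
          ballI n zb e r rs ρ ⊆
            ⋃ j, ballI n (zbs j) (es j) (rj j) (rsj j) (ρs j) ∧
          (∀ j, volume (Prod.fst '' ballI n (zbs j) (es j) (rj j) (rsj j) (ρs j)) =
            ENNReal.ofReal δ * volume (Prod.fst '' ballI n zb e r rs ρ)) ∧
          (∀ j, volume (Prod.snd '' ballI n (zbs j) (es j) (rj j) (rsj j) (ρs j)) =
            ENNReal.ofReal δ * volume (Prod.snd '' ballI n zb e r rs ρ)) := by
  classical
  refine ⟨(11*((n:ℝ)+1))^(2*n) * 11, ((2*n+2 : ℕ) : ℝ), by positivity, by positivity, ?_⟩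
  intro δ hδ0 hδ1 zb e r rs ρ H
  obtain ⟨hinc, hρ, he, hr, hrs, hrrs⟩ := H
  set l : ℝ := δ ^ (((n:ℝ)+2))⁻¹ with hldef
  have hl0 : 0 < l := Real.rpow_pos_of_pos hδ0 _
  have hl1 : l ≤ 1 := Real.rpow_le_one hδ0.le hδ1 (by positivity)
  have hlδ : l ^ (n+2) = δ := by
    rw [hldef, ← Real.rpow_natCast (δ ^ (((n:ℝ)+2))⁻¹) (n+2), ← Real.rpow_mul hδ0.le]
    rw [show ((((n:ℝ)+2))⁻¹ * ((n+2 : ℕ):ℝ)) = 1 by push_cast; field_simp]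
    exact Real.rpow_one δ
  have hδl : δ ≤ l := by
    nth_rewrite 1 [← Real.rpow_one δ]
    apply Real.rpow_le_rpow_of_exponent_ge hδ0 hδ1
    rw [inv_le_one_iff₀]; right; linarith [Nat.cast_nonneg (α := ℝ) n]
  set K : ℤ := ⌈(4*((n:ℝ)+1))/l⌉ with hKdef
  set K2 : ℤ := ⌈(4:ℝ)/l^2⌉ with hK2def
  have hKlb : 4*((n:ℝ)+1)/l ≤ (K:ℝ) := Int.le_ceil _
  have hKub : (K:ℝ) ≤ 4*((n:ℝ)+1)/l + 1 := (Int.ceil_lt_add_one _).le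
  have hK2lb : (4:ℝ)/l^2 ≤ (K2:ℝ) := Int.le_ceil _
  have hK2ub : (K2:ℝ) ≤ 4/l^2 + 1 := (Int.ceil_lt_add_one _).le
  have hK0 : (0:ℤ) ≤ K := by
    have : (0:ℝ) ≤ (K:ℝ) := le_trans (by positivity) hKlb
    exact_mod_cast this
  have hK20 : (0:ℤ) ≤ K2 := by
    have : (0:ℝ) ≤ (K2:ℝ) := le_trans (by positivity) hK2lb
    exact_mod_cast this
  set hh : Fin n → ℝ := fun j => l * r j / (4*((n:ℝ)+1)) with hhdef
  set hhs : Fin n → ℝ := fun j => l * rs j / (4*((n:ℝ)+1)) with hhsdef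
  set hsg : ℝ := l^2 * ρ / 2 with hsgdef
  have hhp : ∀ j, 0 < hh j := fun j => by rw [hhdef]; have := hr j; positivity
  have hhsp : ∀ j, 0 < hhs j := fun j => by rw [hhsdef]; have := hrs j; positivity
  have hsgp : 0 < hsg := by rw [hsgdef]; positivity
  set center : IndexT K K2 n → (Pt n × Pt n) := fun i =>
    ((zb.1.1 + ∑ j, (((i.1 j : ℤ) : ℝ) * hh j) • e j,
      (zb.1.2 - ‖zb.2.1 - zb.1.1‖^2)
        + ‖(zb.1.1 + ∑ j, (((i.1 j : ℤ) : ℝ) * hh j) • e j) - zb.2.1‖^2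
        + ((i.2.2 : ℤ) : ℝ) * hsg),
     (zb.2.1 + ∑ j, (((i.2.1 j : ℤ) : ℝ) * hhs j) • e j,
      ((zb.1.2 - ‖zb.2.1 - zb.1.1‖^2)
        + ‖(zb.1.1 + ∑ j, (((i.1 j : ℤ) : ℝ) * hh j) • e j) - zb.2.1‖^2
        + ((i.2.2 : ℤ) : ℝ) * hsg)
        - ‖(zb.2.1 + ∑ j, (((i.2.1 j : ℤ) : ℝ) * hhs j) • e j)
            - (zb.1.1 + ∑ j, (((i.1 j : ℤ) : ℝ) * hh j) • e j)‖^2)) with hcenter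
  have hparams : ∀ i : IndexT K K2 n,
      IsBallParams n (center i) e (fun j => l * r j) (fun j => l * rs j) (l^2*ρ) := by
    intro i
    refine ⟨rfl, by positivity, he, fun j => by have := hr j; positivity,
      fun j => by have := hrs j; positivity, fun j => ?_⟩
    rw [← hrrs j]; ring
  refine ⟨Fintype.card (IndexT K K2 n),
    fun j => center ((Fintype.equivFin (IndexT K K2 n)).symm j), fun _ => e,
    fun _ => (fun j => l * r j), fun _ => (fun j => l * rs j), fun _ => l^2*ρ,
    ?_, fun j => hparams _, ?_, ?_, ?_⟩
  · -- cardinality bound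
    have hN1 : (((K + 1 - -K).toNat : ℕ) : ℝ) ≤ 11*(((n:ℝ)+1)/l) := by
      have hcast : (((K + 1 - -K).toNat : ℕ) : ℝ) = ((K + 1 - -K : ℤ) : ℝ) := by
        have h := Int.toNat_of_nonneg (show (0:ℤ) ≤ K + 1 - -K by omega)
        exact_mod_cast h
      rw [hcast]
      push_cast
      have h1l : 1 ≤ ((n:ℝ)+1)/l := by
        rw [le_div_iff₀ hl0]; linarith [Nat.cast_nonneg (α := ℝ) n]
      have hKub' : (K:ℝ) ≤ 4*(((n:ℝ)+1)/l) + 1 := by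
        calc (K:ℝ) ≤ 4*((n:ℝ)+1)/l + 1 := hKub
          _ = 4*(((n:ℝ)+1)/l) + 1 := by ring
      linarith
    have hN2 : (((K2 + 1 - -K2).toNat : ℕ) : ℝ) ≤ 11*(1/l^2) := by
      have hcast : (((K2 + 1 - -K2).toNat : ℕ) : ℝ) = ((K2 + 1 - -K2 : ℤ) : ℝ) := by
        have h := Int.toNat_of_nonneg (show (0:ℤ) ≤ K2 + 1 - -K2 by omega)
        exact_mod_cast h
      rw [hcast]
      push_cast
      have h1l : 1 ≤ 1/l^2 := by
        rw [le_div_iff₀ (by positivity)]; nlinarith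
      have hK2ub' : (K2:ℝ) ≤ 4*(1/l^2) + 1 := by
        calc (K2:ℝ) ≤ 4/l^2 + 1 := hK2ub
          _ = 4*(1/l^2) + 1 := by ring
      linarith
    have hmle : ((Fintype.card (IndexT K K2 n) : ℕ) : ℝ)
        ≤ (11*(((n:ℝ)+1)/l))^n * ((11*(((n:ℝ)+1)/l))^n * (11*(1/l^2))) := by
      rw [card_IndexT]
      push_cast
      gcongr <;> positivity
    have hub : (11*(((n:ℝ)+1)/l))^n * ((11*(((n:ℝ)+1)/l))^n * (11*(1/l^2)))
        = ((11*((n:ℝ)+1))^(2*n) * 11) * (l⁻¹)^(2*n+2) := by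
      simp only [div_eq_mul_inv, one_mul, mul_pow, ← inv_pow]
      ring
    have hinv : l⁻¹ ≤ δ⁻¹ := by
      gcongr
    have hmono : (l⁻¹)^(2*n+2) ≤ (δ⁻¹)^(2*n+2) :=
      pow_le_pow_left₀ (by positivity) hinv _
    have hA : δ ^ (-(((2*n+2:ℕ)):ℝ)) = (δ⁻¹)^(2*n+2) := by
      rw [Real.rpow_neg hδ0.le, Real.rpow_natCast, ← inv_pow]
    calc ((Fintype.card (IndexT K K2 n) : ℕ) : ℝ)
        ≤ (11*(((n:ℝ)+1)/l))^n * ((11*(((n:ℝ)+1)/l))^n * (11*(1/l^2))) := hmle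
      _ = ((11*((n:ℝ)+1))^(2*n) * 11) * (l⁻¹)^(2*n+2) := hub
      _ ≤ ((11*((n:ℝ)+1))^(2*n) * 11) * (δ⁻¹)^(2*n+2) := by
          apply mul_le_mul_of_nonneg_left hmono (by positivity)
      _ = ((11*((n:ℝ)+1))^(2*n) * 11) * δ ^ (-(((2*n+2:ℕ)):ℝ)) := by rw [hA]
  · -- subset
    intro z hz
    obtain ⟨⟨x1, x2⟩, x3, x4⟩ := z
    obtain ⟨hz1, hz2, hz3, hz4, hz5⟩ := hz
    dsimp only at hz1 hz2 hz3 hz4 hz5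
    subst hz1
    set a : Fin n → ℝ := fun j => ⟪x1 - zb.1.1, e j⟫ with hadef
    set b : Fin n → ℝ := fun j => ⟪x3 - zb.2.1, e j⟫ with hbdef
    set s : ℝ := x2 - zb.2.2 - ‖x1 - zb.2.1‖^2 with hsdef
    set k : Fin n → ℤ := fun j => round (a j / hh j) with hkdef
    set α : Fin n → ℝ := fun j => ((k j : ℤ) : ℝ) * hh j with hαdef
    set ks : Fin n → ℤ := fun j => round (b j / hhs j) with hksdef
    set β : Fin n → ℝ := fun j => ((ks j : ℤ) : ℝ) * hhs j with hβdef
    set c1 : ℝ := 2*∑ i, (a i - α i) * β i with hc1def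
    set k3 : ℤ := round ((s + c1)/hsg) with hk3def
    set σ : ℝ := ((k3 : ℤ) : ℝ) * hsg with hσdef
    have hclose_a : ∀ j, |a j - α j| ≤ hh j / 2 := fun j => round_close (hh j) (a j) (hhp j)
    have hclose_b : ∀ j, |b j - β j| ≤ hhs j / 2 := fun j => round_close (hhs j) (b j) (hhsp j)
    have hclose_s : |(s + c1) - σ| ≤ hsg / 2 := round_close hsg (s + c1) hsgp
    have haj : ∀ j, |a j| < r j := hz2
    have hbj : ∀ j, |b j| < rs j := hz4
    have hβb : ∀ j, |β j| ≤ 2 * rs j := by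
      intro j
      have h1 := abs_le.mp (hclose_b j)
      have h2 := abs_lt.mp (hbj j)
      have h3 : hhs j ≤ rs j := by
        rw [hhsdef]
        rw [div_le_iff₀ (by positivity)]
        nlinarith [hrs j, hl1, hl0.le, Nat.cast_nonneg (α := ℝ) n]
      rw [abs_le]; constructor <;> nlinarith
    have hsum1 : |∑ i, (a i - α i) * β i| ≤ (n:ℝ) * (l*ρ/(4*((n:ℝ)+1))) := by
      calc |∑ i, (a i - α i) * β i| ≤ ∑ i, |(a i - α i) * β i| :=
            Finset.abs_sum_le_sum_abs _ _
        _ ≤ ∑ _i : Fin n, (l*ρ/(4*((n:ℝ)+1))) := by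
            apply Finset.sum_le_sum
            intro i _
            rw [abs_mul]
            calc |a i - α i| * |β i| ≤ (hh i/2) * (2*rs i) := by
                  apply mul_le_mul (hclose_a i) (hβb i) (abs_nonneg _) (by linarith [hhp i])
              _ = l * (r i * rs i) / (4*((n:ℝ)+1)) := by rw [hhdef]; ring
              _ = l*ρ/(4*((n:ℝ)+1)) := by rw [hrrs i]
        _ = (n:ℝ) * (l*ρ/(4*((n:ℝ)+1))) := by
            rw [Finset.sum_const, Finset.card_univ, Fintype.card_fin, nsmul_eq_mul]
    have hc1ρ : |c1| ≤ ρ := by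
      have habs : |c1| = 2*|∑ i, (a i - α i) * β i| := by
        rw [hc1def, abs_mul, abs_of_nonneg (by norm_num : (0:ℝ) ≤ 2)]
      have hfin : 2*((n:ℝ) * (l*ρ/(4*((n:ℝ)+1)))) ≤ ρ := by
        rw [show 2*((n:ℝ) * (l*ρ/(4*((n:ℝ)+1)))) = (2*(n:ℝ)*l*ρ)/(4*((n:ℝ)+1)) by ring,
          div_le_iff₀ (by positivity)]
        nlinarith [mul_nonneg (Nat.cast_nonneg (α := ℝ) n) hρ.le,
          mul_nonneg (mul_nonneg (Nat.cast_nonneg (α := ℝ) n) hρ.le) (sub_nonneg.mpr hl1)]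
      linarith [habs, hsum1]
    have hsc1 : |s + c1| ≤ 2*ρ := by
      have := abs_add_le s c1
      linarith [hz3]
    have hmemk : ∀ j, k j ∈ Finset.Icc (-K) K := by
      intro j
      have hrat : r j / hh j = 4*((n:ℝ)+1)/l := by
        rw [hhdef]
        have h1 : r j ≠ 0 := (hr j).ne'
        have h2 : l ≠ 0 := hl0.ne'
        have h3 : (4*((n:ℝ)+1)) ≠ 0 := by positivity
        field_simp
      exact round_bdd (hh j) (a j) (r j) (hhp j) (haj j).le K (by rw [hrat]; exact hKlb)
    have hmemks : ∀ j, ks j ∈ Finset.Icc (-K) K := by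
      intro j
      have hrat : rs j / hhs j = 4*((n:ℝ)+1)/l := by
        rw [hhsdef]
        have h1 : rs j ≠ 0 := (hrs j).ne'
        have h2 : l ≠ 0 := hl0.ne'
        have h3 : (4*((n:ℝ)+1)) ≠ 0 := by positivity
        field_simp
      exact round_bdd (hhs j) (b j) (rs j) (hhsp j) (hbj j).le K (by rw [hrat]; exact hKlb)
    have hmemk3 : k3 ∈ Finset.Icc (-K2) K2 := by
      have hrat : 2*ρ/hsg = 4/l^2 := by
        rw [hsgdef]
        have h1 : ρ ≠ 0 := hρ.ne'
        have h2 : l ≠ 0 := hl0.ne'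
        field_simp
        ring
      exact round_bdd hsg (s + c1) (2*ρ) hsgp hsc1 K2 (by rw [hrat]; exact hK2lb)
    set ii : IndexT K K2 n :=
      ⟨fun j => ⟨k j, hmemk j⟩, fun j => ⟨ks j, hmemks j⟩, ⟨k3, hmemk3⟩⟩ with hii
    rw [Set.mem_iUnion]
    refine ⟨Fintype.equivFin (IndexT K K2 n) ii, ?_⟩
    simp only [Equiv.symm_apply_apply]
    -- now prove membership via mem_small_ball
    have h2' : ∀ j, |⟪x1 - zb.1.1, e j⟫ - α j| < l * r j := by
      intro j
      have h1 := hclose_a j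
      have h2 : hh j / 2 < l * r j := by
        rw [hhdef, div_div, div_lt_iff₀ (by positivity)]
        nlinarith [mul_pos hl0 (hr j), mul_nonneg (mul_pos hl0 (hr j)).le
          (Nat.cast_nonneg (α := ℝ) n)]
      exact lt_of_le_of_lt h1 h2
    have h4' : ∀ j, |⟪x3 - zb.2.1, e j⟫ - β j| < l * rs j := by
      intro j
      have h1 := hclose_b j
      have h2 : hhs j / 2 < l * rs j := by
        rw [hhsdef, div_div, div_lt_iff₀ (by positivity)]
        nlinarith [mul_pos hl0 (hrs j), mul_nonneg (mul_pos hl0 (hrs j)).le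
          (Nat.cast_nonneg (α := ℝ) n)]
      exact lt_of_le_of_lt h1 h2
    have hX : x2 - (zb.1.2 - ‖zb.2.1 - zb.1.1‖^2) - ‖x1 - zb.2.1‖^2 = s := by
      rw [hsdef, hinc]
    have h3' : |(x2 - (zb.1.2 - ‖zb.2.1 - zb.1.1‖^2) - ‖x1 - zb.2.1‖^2) - σ
        + 2*∑ i, (⟪x1 - zb.1.1, e i⟫ - α i) * β i| < l^2*ρ := by
      have heq : (x2 - (zb.1.2 - ‖zb.2.1 - zb.1.1‖^2) - ‖x1 - zb.2.1‖^2) - σ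
          + 2*∑ i, (⟪x1 - zb.1.1, e i⟫ - α i) * β i = (s + c1) - σ := by
        rw [hX, hc1def]
        have : ∑ i, (⟪x1 - zb.1.1, e i⟫ - α i) * β i = ∑ i, (a i - α i) * β i := rfl
        rw [this]; ring
      rw [heq]
      have hP : (0:ℝ) < l^2*ρ := by positivity
      calc |(s + c1) - σ| ≤ hsg / 2 := hclose_s
        _ < l^2*ρ := by rw [hsgdef]; linarith
    have h5' : |(x2 - (zb.1.2 - ‖zb.2.1 - zb.1.1‖^2) - ‖x1 - zb.2.1‖^2) - σ
        + 2*∑ i, (⟪x1 - zb.1.1, e i⟫ - α i) * ⟪x3 - zb.2.1, e i⟫| < l^2*ρ := by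
      have hsum_split : ∑ i, (a i - α i) * b i
          = (∑ i, (a i - α i) * β i) + ∑ i, (a i - α i) * (b i - β i) := by
        rw [← Finset.sum_add_distrib]
        exact Finset.sum_congr rfl fun i _ => by ring
      have heq : (x2 - (zb.1.2 - ‖zb.2.1 - zb.1.1‖^2) - ‖x1 - zb.2.1‖^2) - σ
          + 2*∑ i, (⟪x1 - zb.1.1, e i⟫ - α i) * ⟪x3 - zb.2.1, e i⟫
          = ((s + c1) - σ) + 2*(∑ i, (a i - α i) * (b i - β i)) := by
        rw [hX]
        have : ∑ i, (⟪x1 - zb.1.1, e i⟫ - α i) * ⟪x3 - zb.2.1, e i⟫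
            = ∑ i, (a i - α i) * b i := rfl
        rw [this, hsum_split, hc1def]; ring
      rw [heq]
      have hQ : |∑ i, (a i - α i) * (b i - β i)| ≤ (n:ℝ) * (l^2*ρ/(64*((n:ℝ)+1)^2)) := by
        calc |∑ i, (a i - α i) * (b i - β i)| ≤ ∑ i, |(a i - α i) * (b i - β i)| :=
              Finset.abs_sum_le_sum_abs _ _
          _ ≤ ∑ _i : Fin n, (l^2*ρ/(64*((n:ℝ)+1)^2)) := by
              apply Finset.sum_le_sum
              intro i _
              rw [abs_mul]
              calc |a i - α i| * |b i - β i| ≤ (hh i/2) * (hhs i/2) := by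
                    apply mul_le_mul (hclose_a i) (hclose_b i) (abs_nonneg _) (by linarith [hhp i])
                _ = l^2 * (r i * rs i) / (64*((n:ℝ)+1)^2) := by
                    have h4 : (4*((n:ℝ)+1)) ≠ 0 := by positivity
                    rw [hhdef, hhsdef]
                    field_simp
                    ring
                _ = l^2*ρ/(64*((n:ℝ)+1)^2) := by rw [hrrs i]
          _ = (n:ℝ) * (l^2*ρ/(64*((n:ℝ)+1)^2)) := by
              rw [Finset.sum_const, Finset.card_univ, Fintype.card_fin, nsmul_eq_mul]
      have hterm2 : (n:ℝ) * (l^2*ρ/(64*((n:ℝ)+1)^2)) ≤ l^2*ρ/64 := by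
        rw [show (n:ℝ) * (l^2*ρ/(64*((n:ℝ)+1)^2)) = ((n:ℝ)*(l^2*ρ))/(64*((n:ℝ)+1)^2) by ring,
          div_le_div_iff₀ (by positivity) (by positivity)]
        nlinarith [mul_nonneg (mul_nonneg (sq_nonneg l) hρ.le) (sq_nonneg ((n:ℝ))),
          mul_nonneg (mul_nonneg (sq_nonneg l) hρ.le) (Nat.cast_nonneg (α := ℝ) n),
          mul_nonneg (sq_nonneg l) hρ.le]
      have hP : (0:ℝ) < l^2*ρ := by positivity
      calc |((s + c1) - σ) + 2*(∑ i, (a i - α i) * (b i - β i))|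
          ≤ |(s + c1) - σ| + |2*(∑ i, (a i - α i) * (b i - β i))| := abs_add_le _ _
        _ ≤ hsg/2 + 2*((n:ℝ) * (l^2*ρ/(64*((n:ℝ)+1)^2))) := by
            have h2Q : |2*(∑ i, (a i - α i) * (b i - β i))|
                ≤ 2*((n:ℝ) * (l^2*ρ/(64*((n:ℝ)+1)^2))) := by
              rw [abs_mul, abs_of_nonneg (by norm_num : (0:ℝ) ≤ 2)]
              linarith [hQ]
            exact add_le_add hclose_s h2Q
        _ < l^2*ρ := by rw [hsgdef]; linarith [hterm2]
    exact mem_small_ball he zb.1.1 zb.2.1 x1 x3 zb.1.2 x2 σ (l^2*ρ) α β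
      (fun j => l * r j) (fun j => l * rs j) h2' h4' h3' h5'
  · -- volumes fst
    intro j
    rw [vol_fst (hparams _), vol_fst ⟨hinc, hρ, he, hr, hrs, hrrs⟩, vol_box_smul e r l hl0]
    have hsc : ENNReal.ofReal (2*(l^2*ρ)) * ENNReal.ofReal (l^n)
        = ENNReal.ofReal δ * ENNReal.ofReal (2*ρ) := by
      rw [← ENNReal.ofReal_mul (by positivity), ← ENNReal.ofReal_mul hδ0.le]
      congr 1
      rw [← hlδ]; ring
    rw [← mul_assoc, hsc, mul_assoc]
  · -- volumes snd
    intro j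
    rw [vol_snd (hparams _), vol_snd ⟨hinc, hρ, he, hr, hrs, hrrs⟩, vol_box_smul e rs l hl0]
    have hsc : ENNReal.ofReal (2*(l^2*ρ)) * ENNReal.ofReal (l^n)
        = ENNReal.ofReal δ * ENNReal.ofReal (2*ρ) := by
      rw [← ENNReal.ofReal_mul (by positivity), ← ENNReal.ofReal_mul hδ0.le]
      congr 1
      rw [← hlδ]; ring
    rw [← mul_assoc, hsc, mul_assoc]


/-- covering lemma: any ball `ℬ` can be covered by at most
`C δ^{-A}` balls `ℬ_j` whose projections satisfy `|π(ℬ_j)| = δ |π(ℬ)|` and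
`|π*(ℬ_j)| = δ |π*(ℬ)|`. -/
theorem stmt17 (d : ℕ) (hd : 2 ≤ d) :
    ∃ C A : ℝ, 0 < C ∧ 0 < A ∧
      ∀ (δ : ℝ), 0 < δ → δ ≤ 1 →
      ∀ (zb : Pt (d - 1) × Pt (d - 1)) (e : Fin (d - 1) → Vec (d - 1))
        (r rs : Fin (d - 1) → ℝ) (ρ : ℝ), IsBallParams (d - 1) zb e r rs ρ →
        ∃ (m : ℕ) (zbs : Fin m → Pt (d - 1) × Pt (d - 1))
          (es : Fin m → Fin (d - 1) → Vec (d - 1))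
          (rj rsj : Fin m → Fin (d - 1) → ℝ) (ρs : Fin m → ℝ),
          (m : ℝ) ≤ C * δ ^ (-A) ∧
          (∀ j, IsBallParams (d - 1) (zbs j) (es j) (rj j) (rsj j) (ρs j)) ∧
          ballI (d - 1) zb e r rs ρ ⊆
            ⋃ j, ballI (d - 1) (zbs j) (es j) (rj j) (rsj j) (ρs j) ∧
          (∀ j, volume (Prod.fst '' ballI (d - 1) (zbs j) (es j) (rj j) (rsj j) (ρs j)) =
            ENNReal.ofReal δ * volume (Prod.fst '' ballI (d - 1) zb e r rs ρ)) ∧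
          (∀ j, volume (Prod.snd '' ballI (d - 1) (zbs j) (es j) (rj j) (rsj j) (ρs j)) =
            ENNReal.ofReal δ * volume (Prod.snd '' ballI (d - 1) zb e r rs ρ)) := by
  exact main_cover (d-1)
end
end
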